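/- Let H be a primitive, aperiodic and marked substitution over a finite alphabet A. Then there exists a constant C with 0 < C < 1 such that the following holds: for every z ∈ A^ℕ whose factors all lie in L_H, and for any two bispecial words U and V of L_H occurring in z at positions i and j respectively with i < j, j < i + |U| (so the occurrences overlap) and |U| ≤ |V|, the length of the overlap satisfies i + |U| − j ≤ C·|U|. -/

import Mathlib

open Filter Topology MeasureTheory

variable {A : Type*}

/-- The shift map on infinite words. -/
def shift (x : ℕ → A) : ℕ → A := fun n => x (n + 1)

/-- Image of a finite word under a substitution. -/
def wordMap (H : A → List A) (w : List A) : List A := w.flatMap H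

/-- Image of an infinite word under a substitution (each `H a` nonempty makes this the
infinite concatenation `H(x₀)H(x₁)⋯`). -/
def substSeq (H : A → List A) (x : ℕ → A) : ℕ → A :=
  fun n => (wordMap H ((List.range (n + 1)).map x)).getD n (x 0)

/-- The prefix of length `n` of an infinite word. -/
def prefixWord (x : ℕ → A) (n : ℕ) : List A := (List.range n).map x

/-- The factor of length `n` at position `i` of an infinite word. -/
def factorAt (x : ℕ → A) (i n : ℕ) : List A := (List.range n).map fun j => x (i + j)

/-- The language of an infinite word: the set of its finite factors. -/
def Lang (u : ℕ → A) : Set (List A) := {w | ∃ i, w = factorAt u i w.length}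

/-- A sequence is (purely) periodic for the shift. -/
def PeriodicSeq (x : ℕ → A) : Prop := ∃ m, 0 < m ∧ ∀ n, x (n + m) = x n

/-- `u` is a fixed point of the substitution `H`. -/
def IsFixedPointSubst (H : A → List A) (u : ℕ → A) : Prop := substSeq H u = u

/-- `H` is primitive: some power of `H` maps every letter onto a word containing
every letter. -/
def PrimitiveSubst (H : A → List A) : Prop :=
  ∃ k, 0 < k ∧ ∀ a b : A, b ∈ (wordMap H)^[k] [a]

/-- `H` is aperiodic: no fixed point of `H` is periodic for the shift. -/
def AperiodicSubst (H : A → List A) : Prop :=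
  ∀ u : ℕ → A, IsFixedPointSubst H u → ¬ PeriodicSeq u

/-- `H` is marked: first letters of images are pairwise distinct, and so are last letters. -/
def MarkedSubst (H : A → List A) (hne : ∀ a, H a ≠ []) : Prop :=
  Function.Injective (fun a => (H a).head (hne a)) ∧
  Function.Injective (fun a => (H a).getLast (hne a))

/-- `H` is 2-full (with respect to the fixed point `u`): every word of length 2 belongs
to the language. -/
def TwoFull (H : A → List A) (u : ℕ → A) : Prop :=
  ∀ w : List A, w.length = 2 → w ∈ Lang u

/-- The attractor `K`: closure of the shift-orbit of the fixed point `u`. -/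
def orbitClosure [TopologicalSpace A] (u : ℕ → A) : Set (ℕ → A) :=
  closure {y | ∃ n, y = shift^[n] u}

/-- `δ(x)`: the length of the maximal prefix of `x` belonging to the language of `u`. -/
noncomputable def delta (u x : ℕ → A) : ℕ := sSup {n | prefixWord x n ∈ Lang u}

/-- The renormalization operator `R`. -/
noncomputable def renorm (H : A → List A) (V : (ℕ → A) → ℝ) : (ℕ → A) → ℝ :=
  fun x => ∑ i ∈ Finset.range (H (x 0)).length, V (shift^[i] (substSeq H x))

/-- `t_n(x) = |H^n(x₀)|`. -/
def tlen (H : A → List A) (n : ℕ) (x : ℕ → A) : ℕ := ((wordMap H)^[n] [x 0]).length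

/-- An accident occurs at time `b`. -/
def AccidentAt (u x : ℕ → A) (b : ℕ) : Prop :=
  0 < b ∧ delta u x - b < delta u (shift^[b] x) ∧
    ∀ i < b, delta u (shift^[i] x) = delta u x - i

/-- The first accident time of `x` (junk value `0` if there is none). -/
noncomputable def firstAccident (u x : ℕ → A) : ℕ := sInf {b | AccidentAt u x b}

/-- The `j`-th accident time `B_j` of `x`, defined inductively. -/
noncomputable def accidentTime (u x : ℕ → A) : ℕ → ℕ
  | 0 => 0
  | j + 1 => accidentTime u x j + firstAccident u (shift^[accidentTime u x j] x)

/-- The set of (genuine) accident times of `x`. -/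
def AccidentSet (u x : ℕ → A) : Set ℕ :=
  {B | ∃ j : ℕ, B = accidentTime u x (j + 1) ∧
        AccidentAt u (shift^[accidentTime u x j] x)
          (firstAccident u (shift^[accidentTime u x j] x))}

/-- A word is right special. -/
def RightSpecial (u : ℕ → A) (w : List A) : Prop :=
  ∃ b c : A, b ≠ c ∧ w ++ [b] ∈ Lang u ∧ w ++ [c] ∈ Lang u

/-- A word is left special. -/
def LeftSpecial (u : ℕ → A) (w : List A) : Prop :=
  ∃ a b : A, a ≠ b ∧ a :: w ∈ Lang u ∧ b :: w ∈ Lang u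

/-- A word is bispecial. -/
def Bispecial (u : ℕ → A) (w : List A) : Prop := RightSpecial u w ∧ LeftSpecial u w

/-- `l` is a recognizability constant for `H`: every long enough word of the language
admits a unique desubstitution. -/
def RecogBound (H : A → List A) (u : ℕ → A) (l : ℕ) : Prop :=
  ∀ z ∈ Lang u, l < z.length →
    ∃! d : List A × List A × List A,
      ∃ s p : A,
        z = d.1 ++ wordMap H d.2.1 ++ d.2.2 ∧
        d.2.1 ∈ Lang u ∧
        d.1 <:+ H s ∧ d.1.length < (H s).length ∧
        d.2.2 <+: H p ∧ d.2.2.length < (H p).length ∧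
        ([s] ++ d.2.1 ++ [p]) ∈ Lang u

/-- The incidence matrix of a substitution, with real entries. -/
def incMat [Fintype A] [DecidableEq A] (H : A → List A) : Matrix A A ℝ :=
  fun a b => ((H a).count b : ℝ)

/-- `lam` is the Perron–Frobenius eigenvalue of the incidence matrix of the (primitive)
substitution `H`: it admits an entrywise positive eigenvector. -/
def IsPerronValue [Fintype A] [DecidableEq A] (H : A → List A) (lam : ℝ) : Prop :=
  ∃ v : A → ℝ, (∀ a, 0 < v a) ∧ (incMat H).mulVec v = lam • v

/-- Concatenation of a finite word with an infinite word. -/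
def catWord (S : List A) (y : ℕ → A) : ℕ → A :=
  fun n => S.getD n (y (n - S.length))

namespace Ov

@[simp] lemma length_factorAt (x : ℕ → A) (i n : ℕ) : (factorAt x i n).length = n := by
  simp [factorAt]

@[simp] lemma length_prefixWord (x : ℕ → A) (n : ℕ) : (prefixWord x n).length = n := by
  simp [prefixWord]

lemma factorAt_getElem? (x : ℕ → A) (i n j : ℕ) (h : j < n) :
    (factorAt x i n)[j]? = some (x (i + j)) := by
  simp [factorAt, List.getElem?_map, List.getElem?_range, h]

lemma prefixWord_getElem? (x : ℕ → A) (n j : ℕ) (h : j < n) :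
    (prefixWord x n)[j]? = some (x j) := by
  simp [prefixWord, List.getElem?_map, List.getElem?_range, h]

lemma getElem?_none_of_ge {l : List A} {j : ℕ} (h : l.length ≤ j) : l[j]? = none :=
  List.getElem?_eq_none h

lemma factorAt_add (x : ℕ → A) (i a b : ℕ) :
    factorAt x i (a + b) = factorAt x i a ++ factorAt x (i + a) b := by
  apply List.ext_getElem?
  intro j
  rcases lt_or_ge j a with hj | hj
  · rw [List.getElem?_append_left (by simpa using hj), factorAt_getElem? _ _ _ _ hj,
      factorAt_getElem? _ _ _ _ (by omega)]
  · rcases lt_or_ge j (a+b) with hj2 | hj2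
    · rw [List.getElem?_append_right (by simpa using hj), factorAt_getElem? _ _ _ _ hj2]
      rw [length_factorAt, factorAt_getElem? _ _ _ _ (by omega)]
      congr 2
      omega
    · rw [getElem?_none_of_ge (by simpa using hj2), getElem?_none_of_ge (by simp; omega)]

lemma factorAt_succ_right (x : ℕ → A) (i n : ℕ) :
    factorAt x i (n + 1) = factorAt x i n ++ [x (i + n)] := by
  rw [factorAt_add]
  congr 1

lemma factorAt_succ_left (x : ℕ → A) (i n : ℕ) :
    factorAt x i (n + 1) = x i :: factorAt x (i + 1) n := by
  apply List.ext_getElem?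
  intro j
  match j with
  | 0 => rw [factorAt_getElem? _ _ _ _ (by omega)]; simp
  | j+1 =>
    rcases lt_or_ge j n with hj | hj
    · rw [factorAt_getElem? _ _ _ _ (by omega)]
      simp only [List.getElem?_cons_succ]
      rw [factorAt_getElem? _ _ _ _ hj]
      congr 2
      omega
    · rw [getElem?_none_of_ge (by simp; omega)]
      simp only [List.getElem?_cons_succ]
      rw [getElem?_none_of_ge (by simp; omega)]

lemma prefixWord_eq_factorAt (x : ℕ → A) (n : ℕ) : prefixWord x n = factorAt x 0 n := by
  apply List.ext_getElem?
  intro j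
  rcases lt_or_ge j n with hj | hj
  · rw [prefixWord_getElem? _ _ _ hj, factorAt_getElem? _ _ _ _ hj]
    simp
  · rw [getElem?_none_of_ge (by simpa using hj), getElem?_none_of_ge (by simpa using hj)]

lemma factorAt_mem_Lang (u : ℕ → A) (i n : ℕ) : factorAt u i n ∈ Lang u :=
  ⟨i, by rw [length_factorAt]⟩

lemma eq_factorAt_of_infix {u : ℕ → A} {w : List A} {i n : ℕ}
    (h : w <:+: factorAt u i n) : ∃ i', w = factorAt u i' w.length := by
  obtain ⟨s, t, hst⟩ := h
  have hlen : s.length + w.length ≤ n := by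
    have := congrArg List.length hst
    simp at this
    omega
  refine ⟨i + s.length, ?_⟩
  apply List.ext_getElem?
  intro j
  rcases lt_or_ge j w.length with hj | hj
  · rw [factorAt_getElem? _ _ _ _ hj]
    have h1 : (factorAt u i n)[s.length + j]? = some (u (i + (s.length + j))) :=
      factorAt_getElem? _ _ _ _ (by omega)
    rw [← hst] at h1
    rw [List.getElem?_append_left (by simp; omega)] at h1
    rw [List.getElem?_append_right (by omega)] at h1
    rw [show s.length + j - s.length = j by omega] at h1
    rw [h1]
    congr 2
    omega
  · rw [getElem?_none_of_ge hj, getElem?_none_of_ge (by simpa using hj)]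

lemma infix_mem_Lang {u : ℕ → A} {w v : List A} (hv : v ∈ Lang u) (h : w <:+: v) :
    w ∈ Lang u := by
  obtain ⟨i, hi⟩ := hv
  rw [hi] at h
  exact eq_factorAt_of_infix h

lemma factorAt_eq_iff (x : ℕ → A) {q q' n : ℕ} :
    factorAt x q n = factorAt x q' n ↔ ∀ ρ < n, x (q + ρ) = x (q' + ρ) := by
  constructor
  · intro h ρ hρ
    have := congrArg (fun l => l[ρ]?) h
    simp only [factorAt_getElem? _ _ _ _ hρ, Option.some.injEq] at this
    exact this
  · intro h
    apply List.ext_getElem?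
    intro j
    rcases lt_or_ge j n with hj | hj
    · rw [factorAt_getElem? _ _ _ _ hj, factorAt_getElem? _ _ _ _ hj, h j hj]
    · rw [getElem?_none_of_ge (by simpa using hj), getElem?_none_of_ge (by simpa using hj)]

section FixedPoint

variable {σ : A → List A} {u : ℕ → A}

lemma wordMap_append (σ : A → List A) (x y : List A) :
    wordMap σ (x ++ y) = wordMap σ x ++ wordMap σ y := by
  simp [wordMap]

@[simp] lemma wordMap_singleton (σ : A → List A) (a : A) : wordMap σ [a] = σ a := by
  simp [wordMap]

@[simp] lemma wordMap_nil (σ : A → List A) : wordMap σ [] = [] := rfl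

lemma wordMap_cons (σ : A → List A) (a : A) (x : List A) :
    wordMap σ (a :: x) = σ a ++ wordMap σ x := by
  simp [wordMap]

lemma length_le_length_wordMap (hne : ∀ a, σ a ≠ []) (x : List A) :
    x.length ≤ (wordMap σ x).length := by
  induction x with
  | nil => simp
  | cons a x ih =>
    rw [wordMap_cons]
    have : 1 ≤ (σ a).length := List.length_pos_iff.2 (hne a)
    simp only [List.length_append, List.length_cons]
    omega

/-- The canonical cut positions of the fixed point. -/
def Phi (σ : A → List A) (u : ℕ → A) (k : ℕ) : ℕ := (wordMap σ (prefixWord u k)).length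

lemma prefixWord_succ (u : ℕ → A) (k : ℕ) :
    prefixWord u (k + 1) = prefixWord u k ++ [u k] := by
  simp [prefixWord, List.range_succ]

@[simp] lemma Phi_zero : Phi σ u 0 = 0 := by simp [Phi, prefixWord]

lemma Phi_succ (k : ℕ) : Phi σ u (k + 1) = Phi σ u k + (σ (u k)).length := by
  simp [Phi, prefixWord_succ, wordMap_append]

lemma Phi_lt_succ (hne : ∀ a, σ a ≠ []) (k : ℕ) : Phi σ u k < Phi σ u (k + 1) := by
  rw [Phi_succ]
  have : 1 ≤ (σ (u k)).length := List.length_pos_iff.2 (hne (u k))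
  omega

lemma Phi_strictMono (hne : ∀ a, σ a ≠ []) : StrictMono (Phi σ u) :=
  strictMono_nat_of_lt_succ (Phi_lt_succ hne)

lemma le_Phi (hne : ∀ a, σ a ≠ []) (k : ℕ) : k ≤ Phi σ u k := by
  induction k with
  | zero => simp
  | succ k ih => have := Phi_lt_succ (u := u) hne k; omega

lemma prefixWord_prefix (u : ℕ → A) {k k' : ℕ} (h : k ≤ k') :
    prefixWord u k <+: prefixWord u k' := by
  refine ⟨factorAt u k (k' - k), ?_⟩
  have h2 := factorAt_add u 0 k (k' - k)
  rw [prefixWord_eq_factorAt, prefixWord_eq_factorAt]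
  rw [show k + (k' - k) = k' by omega] at h2
  simpa using h2.symm

lemma master_getElem? (hne : ∀ a, σ a ≠ []) (hfix : IsFixedPointSubst σ u)
    (k idx : ℕ) (h : idx < Phi σ u k) :
    (wordMap σ (prefixWord u k))[idx]? = some (u idx) := by
  have base : (wordMap σ (prefixWord u (idx + 1)))[idx]? = some (u idx) := by
    have h1 : u idx = substSeq σ u idx := by rw [hfix]
    have h2 : idx < (wordMap σ (prefixWord u (idx + 1))).length := by
      have := length_le_length_wordMap hne (prefixWord u (idx + 1))
      simp at this
      omega
    rw [substSeq] at h1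
    have : (List.range (idx + 1)).map u = prefixWord u (idx + 1) := rfl
    rw [this] at h1
    rw [List.getD_eq_getElem?_getD] at h1
    rcases h3 : (wordMap σ (prefixWord u (idx + 1)))[idx]? with _ | a
    · exact absurd h3 (by rw [List.getElem?_eq_none_iff]; omega)
    · rw [h3] at h1
      simp at h1
      rw [h1]
  rcases le_total k (idx + 1) with hk | hk
  · obtain ⟨t, ht⟩ := prefixWord_prefix u hk
    rw [← ht, wordMap_append, List.getElem?_append_left h] at base
    exact base
  · obtain ⟨t, ht⟩ := prefixWord_prefix u hk
    have hidx : idx < Phi σ u (idx + 1) := by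
      have := le_Phi (u := u) hne (idx + 1)
      omega
    rw [← ht, wordMap_append, List.getElem?_append_left hidx]
    exact base

lemma prefix_image (hne : ∀ a, σ a ≠ []) (hfix : IsFixedPointSubst σ u) (k : ℕ) :
    wordMap σ (prefixWord u k) = prefixWord u (Phi σ u k) := by
  apply List.ext_getElem?
  intro j
  rcases lt_or_ge j (Phi σ u k) with hj | hj
  · rw [master_getElem? hne hfix k j hj, prefixWord_getElem? _ _ _ hj]
  · rw [getElem?_none_of_ge hj, getElem?_none_of_ge (by simpa using hj)]

lemma block_getElem? (hne : ∀ a, σ a ≠ []) (hfix : IsFixedPointSubst σ u)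
    (k j : ℕ) (h : j < (σ (u k)).length) :
    (σ (u k))[j]? = some (u (Phi σ u k + j)) := by
  have h1 := master_getElem? hne hfix (k + 1) (Phi σ u k + j)
    (by rw [Phi_succ]; omega)
  rw [prefixWord_succ, wordMap_append, wordMap_singleton] at h1
  rw [List.getElem?_append_right (by rw [Phi]; omega)] at h1
  rw [show Phi σ u k + j - (wordMap σ (prefixWord u k)).length = j from by
    show Phi σ u k + j - Phi σ u k = j; omega] at h1
  exact h1

lemma factorAt_block (hne : ∀ a, σ a ≠ []) (hfix : IsFixedPointSubst σ u) (k : ℕ) :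
    factorAt u (Phi σ u k) (σ (u k)).length = σ (u k) := by
  apply List.ext_getElem?
  intro j
  rcases lt_or_ge j (σ (u k)).length with hj | hj
  · rw [factorAt_getElem? _ _ _ _ hj, block_getElem? hne hfix k j hj]
  · rw [getElem?_none_of_ge (by simpa using hj), getElem?_none_of_ge hj]

lemma blocks_telescope (hne : ∀ a, σ a ≠ []) (hfix : IsFixedPointSubst σ u) (k l : ℕ) :
    factorAt u (Phi σ u k) (Phi σ u (k + l) - Phi σ u k) = wordMap σ (factorAt u k l) := by
  induction l with
  | zero => simp [factorAt]
  | succ l ih =>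
    have hmono : Phi σ u k ≤ Phi σ u (k + l) := (Phi_strictMono hne).monotone (by omega)
    have hstep : Phi σ u (k + l) < Phi σ u (k + (l + 1)) := by
      rw [show k + (l+1) = (k+l) + 1 by omega]
      exact Phi_lt_succ hne _
    rw [show Phi σ u (k + (l+1)) - Phi σ u k
        = (Phi σ u (k + l) - Phi σ u k) + (σ (u (k+l))).length from by
      rw [show k + (l+1) = (k+l)+1 by omega, Phi_succ]; omega]
    rw [factorAt_add]
    rw [show Phi σ u k + (Phi σ u (k + l) - Phi σ u k) = Phi σ u (k+l) by omega]
    rw [ih, factorAt_block hne hfix, factorAt_succ_right, wordMap_append, wordMap_singleton]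

lemma wordMap_iterate_append (σ : A → List A) (N : ℕ) (x y : List A) :
    (wordMap σ)^[N] (x ++ y) = (wordMap σ)^[N] x ++ (wordMap σ)^[N] y := by
  induction N generalizing x y with
  | zero => simp
  | succ N ih => simp only [Function.iterate_succ_apply, wordMap_append, ih]

@[simp] lemma wordMap_iterate_nil (σ : A → List A) (N : ℕ) : (wordMap σ)^[N] ([] : List A) = [] := by
  induction N with
  | zero => rfl
  | succ N ih => simp [Function.iterate_succ_apply, ih]

lemma wordMap_pow (σ : A → List A) (N : ℕ) (w : List A) :
    wordMap (fun a => (wordMap σ)^[N] [a]) w = (wordMap σ)^[N] w := by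
  induction w with
  | nil => simp
  | cons a w ih =>
    rw [wordMap_cons, ih, show (a :: w) = [a] ++ w from rfl, wordMap_iterate_append]

lemma length_le_length_iterate (hne : ∀ a, σ a ≠ []) (N : ℕ) (x : List A) :
    x.length ≤ ((wordMap σ)^[N] x).length := by
  induction N generalizing x with
  | zero => simp
  | succ N ih =>
    rw [Function.iterate_succ_apply]
    exact le_trans (length_le_length_wordMap hne x) (ih _)

lemma iterate_ne_nil (hne : ∀ a, σ a ≠ []) (N : ℕ) (a : A) :
    (wordMap σ)^[N] [a] ≠ [] := by
  have := length_le_length_iterate hne N [a]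
  simp at this
  intro h
  rw [h] at this
  simp at this

lemma iterate_prefix_image (hne : ∀ a, σ a ≠ []) (hfix : IsFixedPointSubst σ u) (N k : ℕ) :
    ∃ k', k ≤ k' ∧ (wordMap σ)^[N] (prefixWord u k) = prefixWord u k' := by
  induction N with
  | zero => exact ⟨k, le_refl _, rfl⟩
  | succ N ih =>
    obtain ⟨k', hk', h⟩ := ih
    refine ⟨Phi σ u k', ?_, ?_⟩
    · exact le_trans hk' (le_trans (le_Phi hne k') (le_refl _))
    · rw [Function.iterate_succ_apply', h, prefix_image hne hfix]

lemma isFixedPoint_power (hne : ∀ a, σ a ≠ []) (hfix : IsFixedPointSubst σ u) (N : ℕ) :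
    IsFixedPointSubst (fun a => (wordMap σ)^[N] [a]) u := by
  funext n
  show (wordMap (fun a => (wordMap σ)^[N] [a]) ((List.range (n+1)).map u)).getD n (u 0) = u n
  have : (List.range (n + 1)).map u = prefixWord u (n + 1) := rfl
  rw [this, wordMap_pow]
  obtain ⟨k', hk', h⟩ := iterate_prefix_image hne hfix N (n + 1)
  rw [h, List.getD_eq_getElem?_getD, prefixWord_getElem? _ _ _ (by omega)]
  rfl

end FixedPoint

section Marked

variable {σ : A → List A} {u : ℕ → A}

/-- Inverse of the (injective) first-letter map. -/
noncomputable def hinv [Nonempty A] (σ : A → List A) (hne : ∀ a, σ a ≠ []) : A → A :=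
  Function.invFun (fun a => (σ a).head (hne a))

/-- Inverse of the (injective) last-letter map. -/
noncomputable def linv [Nonempty A] (σ : A → List A) (hne : ∀ a, σ a ≠ []) : A → A :=
  Function.invFun (fun a => (σ a).getLast (hne a))

lemma hinv_head [Nonempty A] {hne : ∀ a, σ a ≠ []}
    (hh : Function.Injective fun a => (σ a).head (hne a)) (a : A) :
    hinv σ hne ((σ a).head (hne a)) = a :=
  Function.leftInverse_invFun hh a

lemma linv_last [Nonempty A] {hne : ∀ a, σ a ≠ []}
    (hl : Function.Injective fun a => (σ a).getLast (hne a)) (a : A) :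
    linv σ hne ((σ a).getLast (hne a)) = a :=
  Function.leftInverse_invFun hl a

/-- `p` is a cut point of the canonical tiling. -/
def IsCutP (σ : A → List A) (u : ℕ → A) (p : ℕ) : Prop := ∃ k, Phi σ u k = p

lemma isCutP_zero : IsCutP σ u 0 := ⟨0, by simp⟩

lemma head_getElem? (l : List A) (h : l ≠ []) : l[0]? = some (l.head h) := by
  cases l with
  | nil => exact absurd rfl h
  | cons a l => simp

lemma getLast_getElem? (l : List A) (h : l ≠ []) :
    l[l.length - 1]? = some (l.getLast h) := by
  rw [List.getLast_eq_getElem, List.getElem?_eq_getElem]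

lemma u_at_cut (hne : ∀ a, σ a ≠ []) (hfix : IsFixedPointSubst σ u) (k : ℕ) :
    u (Phi σ u k) = (σ (u k)).head (hne (u k)) := by
  have h1 := block_getElem? hne hfix k 0 (List.length_pos_iff.2 (hne (u k)))
  rw [head_getElem? _ (hne (u k))] at h1
  simpa using h1.symm

lemma u_before_cut (hne : ∀ a, σ a ≠ []) (hfix : IsFixedPointSubst σ u) (k : ℕ) :
    u (Phi σ u (k + 1) - 1) = (σ (u k)).getLast (hne (u k)) := by
  have hlen : 1 ≤ (σ (u k)).length := List.length_pos_iff.2 (hne (u k))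
  have h1 := block_getElem? hne hfix k ((σ (u k)).length - 1) (by omega)
  rw [getLast_getElem? _ (hne (u k))] at h1
  have : Phi σ u k + ((σ (u k)).length - 1) = Phi σ u (k + 1) - 1 := by
    rw [Phi_succ]; omega
  rw [this] at h1
  injection h1 with h1
  exact h1.symm

lemma nextCut [Nonempty A] (hne : ∀ a, σ a ≠ []) (hfix : IsFixedPointSubst σ u)
    (hh : Function.Injective fun a => (σ a).head (hne a))
    {p : ℕ} (hp : IsCutP σ u p) :
    IsCutP σ u (p + (σ (hinv σ hne (u p))).length) ∧
      ∀ r, p < r → r < p + (σ (hinv σ hne (u p))).length → ¬IsCutP σ u r := by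
  obtain ⟨k, rfl⟩ := hp
  have hu : hinv σ hne (u (Phi σ u k)) = u k := by
    rw [u_at_cut hne hfix, hinv_head hh]
  rw [hu]
  constructor
  · exact ⟨k + 1, by rw [Phi_succ]⟩
  · rintro r h1 h2 ⟨j, rfl⟩
    rcases le_or_gt j k with hj | hj
    · have := (Phi_strictMono (u := u) hne).monotone hj
      omega
    · have := (Phi_strictMono (u := u) hne).monotone (show k + 1 ≤ j by omega)
      rw [Phi_succ] at this
      omega

lemma prevCut [Nonempty A] (hne : ∀ a, σ a ≠ []) (hfix : IsFixedPointSubst σ u)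
    (hl : Function.Injective fun a => (σ a).getLast (hne a))
    {p : ℕ} (hp : IsCutP σ u p) (hp0 : 0 < p) :
    (σ (linv σ hne (u (p - 1)))).length ≤ p ∧
      IsCutP σ u (p - (σ (linv σ hne (u (p - 1)))).length) ∧
      ∀ r, p - (σ (linv σ hne (u (p - 1)))).length < r → r < p → ¬IsCutP σ u r := by
  obtain ⟨k, rfl⟩ := hp
  have hk : k ≠ 0 := by rintro rfl; simp at hp0
  obtain ⟨k, rfl⟩ : ∃ m, k = m + 1 := ⟨k - 1, by omega⟩
  have hu : linv σ hne (u (Phi σ u (k + 1) - 1)) = u k := by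
    rw [u_before_cut hne hfix, linv_last hl]
  rw [hu]
  have hPhi : Phi σ u (k + 1) = Phi σ u k + (σ (u k)).length := Phi_succ k
  refine ⟨by omega, ⟨k, by omega⟩, ?_⟩
  rintro r h1 h2 ⟨j, rfl⟩
  rcases le_or_gt j k with hj | hj
  · have := (Phi_strictMono (u := u) hne).monotone hj
    omega
  · have := (Phi_strictMono (u := u) hne).monotone (show k + 1 ≤ j by omega)
    omega

/-- Content equality of two windows. -/
def ContEq (u : ℕ → A) (q q' n : ℕ) : Prop := ∀ ρ < n, u (q + ρ) = u (q' + ρ)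

/-- Equality of relative cut patterns. -/
def SameCuts (σ : A → List A) (u : ℕ → A) (q q' n : ℕ) : Prop :=
  ∀ ρ ≤ n, (IsCutP σ u (q + ρ) ↔ IsCutP σ u (q' + ρ))

lemma sync_up [Nonempty A] (hne : ∀ a, σ a ≠ []) (hfix : IsFixedPointSubst σ u)
    (hh : Function.Injective fun a => (σ a).head (hne a))
    {q q' n : ℕ} (hC : ContEq u q q' n) :
    ∀ j ρ₀, ρ₀ + j ≤ n → IsCutP σ u (q + ρ₀) → IsCutP σ u (q' + ρ₀) →
      (IsCutP σ u (q + (ρ₀ + j)) ↔ IsCutP σ u (q' + (ρ₀ + j))) := by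
  intro j
  induction j using Nat.strong_induction_on with
  | h j ih =>
    intro ρ₀ hρn hc hc'
    rcases Nat.eq_zero_or_pos j with rfl | hj
    · simpa using Iff.intro (fun _ => hc') (fun _ => hc)
    have hρ : ρ₀ < n := by omega
    have hcont : u (q + ρ₀) = u (q' + ρ₀) := hC ρ₀ hρ
    set B := (σ (hinv σ hne (u (q + ρ₀)))).length with hB
    have hB1 : 1 ≤ B := List.length_pos_iff.2 (hne _)
    obtain ⟨hnc, hbet⟩ := nextCut hne hfix hh hc
    obtain ⟨hnc', hbet'⟩ := nextCut hne hfix hh hc'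
    rw [← hcont] at hnc' hbet'
    rcases lt_trichotomy j B with hjB | hjB | hjB
    · constructor
      · intro h; exact absurd h (hbet _ (by omega) (by omega))
      · intro h; exact absurd h (hbet' _ (by omega) (by omega))
    · rw [hjB, show q + (ρ₀ + B) = q + ρ₀ + B from by omega,
        show q' + (ρ₀ + B) = q' + ρ₀ + B from by omega]
      exact Iff.intro (fun _ => hnc') (fun _ => hnc)
    · have h1 : IsCutP σ u (q + (ρ₀ + B)) := by
        rw [show q + (ρ₀ + B) = q + ρ₀ + B from by omega]; exact hnc
      have h2 : IsCutP σ u (q' + (ρ₀ + B)) := by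
        rw [show q' + (ρ₀ + B) = q' + ρ₀ + B from by omega]; exact hnc'
      have := ih (j - B) (by omega) (ρ₀ + B) (by omega) h1 h2
      rw [show ρ₀ + B + (j - B) = ρ₀ + j from by omega] at this
      exact this

lemma sync_down [Nonempty A] (hne : ∀ a, σ a ≠ []) (hfix : IsFixedPointSubst σ u)
    (hl : Function.Injective fun a => (σ a).getLast (hne a))
    {q q' n : ℕ} (hC : ContEq u q q' n) :
    ∀ j ρ₀, ρ₀ ≤ n → j ≤ ρ₀ → IsCutP σ u (q + ρ₀) → IsCutP σ u (q' + ρ₀) →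
      (IsCutP σ u (q + (ρ₀ - j)) ↔ IsCutP σ u (q' + (ρ₀ - j))) := by
  intro j
  induction j using Nat.strong_induction_on with
  | h j ih =>
    intro ρ₀ hρn hjρ hc hc'
    rcases Nat.eq_zero_or_pos j with rfl | hj
    · simpa using Iff.intro (fun _ => hc') (fun _ => hc)
    have hρ0 : 1 ≤ ρ₀ := by omega
    have hcont : u (q + ρ₀ - 1) = u (q' + ρ₀ - 1) := by
      have := hC (ρ₀ - 1) (by omega)
      rw [show q + (ρ₀ - 1) = q + ρ₀ - 1 from by omega,
        show q' + (ρ₀ - 1) = q' + ρ₀ - 1 from by omega] at this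
      exact this
    set B := (σ (linv σ hne (u (q + ρ₀ - 1)))).length with hB
    have hB1 : 1 ≤ B := List.length_pos_iff.2 (hne _)
    obtain ⟨hle, hpc, hbet⟩ := prevCut hne hfix hl hc (by omega)
    obtain ⟨hle', hpc', hbet'⟩ := prevCut hne hfix hl hc' (by omega)
    rw [← hcont] at hle' hpc' hbet'
    rcases lt_trichotomy j B with hjB | hjB | hjB
    · constructor
      · intro h
        exact absurd h (hbet _ (by omega) (by omega))
      · intro h
        exact absurd h (hbet' _ (by omega) (by omega))
    · rw [hjB, show q + (ρ₀ - B) = q + ρ₀ - B from by omega,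
        show q' + (ρ₀ - B) = q' + ρ₀ - B from by omega]
      exact Iff.intro (fun _ => hpc') (fun _ => hpc)
    · have h1 : IsCutP σ u (q + (ρ₀ - B)) := by
        rw [show q + (ρ₀ - B) = q + ρ₀ - B from by omega]; exact hpc
      have h2 : IsCutP σ u (q' + (ρ₀ - B)) := by
        rw [show q' + (ρ₀ - B) = q' + ρ₀ - B from by omega]; exact hpc'
      have := ih (j - B) (by omega) (ρ₀ - B) (by omega) (by omega) h1 h2
      rw [show ρ₀ - B - (j - B) = ρ₀ - j from by omega] at this
      exact this

lemma sync [Nonempty A] (hne : ∀ a, σ a ≠ []) (hfix : IsFixedPointSubst σ u)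
    (hh : Function.Injective fun a => (σ a).head (hne a))
    (hl : Function.Injective fun a => (σ a).getLast (hne a))
    {q q' n : ℕ} (hC : ContEq u q q' n)
    {ρ₀ : ℕ} (hρ₀ : ρ₀ ≤ n) (hc : IsCutP σ u (q + ρ₀)) (hc' : IsCutP σ u (q' + ρ₀)) :
    SameCuts σ u q q' n := by
  intro ρ hρ
  rcases le_or_gt ρ₀ ρ with h | h
  · have := sync_up hne hfix hh hC (ρ - ρ₀) ρ₀ (by omega) hc hc'
    rw [show ρ₀ + (ρ - ρ₀) = ρ from by omega] at this
    exact this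
  · have := sync_down hne hfix hl hC (ρ₀ - ρ) ρ₀ hρ₀ (by omega) hc hc'
    rw [show ρ₀ - (ρ₀ - ρ) = ρ from by omega] at this
    exact this

end Marked

section Machine

variable [Fintype A] [DecidableEq A] {σ : A → List A} {u : ℕ → A}

/-- Maximal block length. -/
def Mlen (σ : A → List A) [Fintype A] : ℕ := Finset.univ.sup fun a => (σ a).length

lemma length_le_Mlen [Fintype A] (σ : A → List A) (a : A) :
    (σ a).length ≤ Mlen σ :=
  Finset.le_sup (f := fun a => (σ a).length) (Finset.mem_univ a)

lemma exists_blockIdx (hne : ∀ a, σ a ≠ []) (p : ℕ) :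
    ∃ k, Phi σ u k ≤ p ∧ p < Phi σ u (k + 1) := by
  induction p with
  | zero =>
    refine ⟨0, by simp, ?_⟩
    have := Phi_lt_succ (u := u) hne 0
    simpa using this
  | succ p ih =>
    obtain ⟨k, h1, h2⟩ := ih
    rcases lt_or_ge (p + 1) (Phi σ u (k + 1)) with h | h
    · exact ⟨k, by omega, h⟩
    · refine ⟨k + 1, by omega, ?_⟩
      have := Phi_lt_succ (u := u) hne (k + 1)
      omega

/-- Index of the block containing position `p`. -/
noncomputable def bIdx (σ : A → List A) (u : ℕ → A) (hne : ∀ a, σ a ≠ []) (p : ℕ) : ℕ :=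
  Classical.choose (exists_blockIdx (u := u) hne p)

lemma bIdx_spec (hne : ∀ a, σ a ≠ []) (p : ℕ) :
    Phi σ u (bIdx σ u hne p) ≤ p ∧ p < Phi σ u (bIdx σ u hne p + 1) :=
  Classical.choose_spec (exists_blockIdx (u := u) hne p)

lemma blockIdx_unique (hne : ∀ a, σ a ≠ []) {p k k' : ℕ}
    (h1 : Phi σ u k ≤ p) (h2 : p < Phi σ u (k + 1))
    (h3 : Phi σ u k' ≤ p) (h4 : p < Phi σ u (k' + 1)) : k = k' := by
  by_contra hkk
  rcases Nat.lt_or_ge k k' with h | h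
  · have := (Phi_strictMono (u := u) hne).monotone (show k + 1 ≤ k' by omega)
    omega
  · have := (Phi_strictMono (u := u) hne).monotone (show k' + 1 ≤ k by omega)
    omega

lemma bIdx_eq_of (hne : ∀ a, σ a ≠ []) {p k : ℕ}
    (h1 : Phi σ u k ≤ p) (h2 : p < Phi σ u (k + 1)) : bIdx σ u hne p = k := by
  obtain ⟨h3, h4⟩ := bIdx_spec (u := u) hne p
  exact blockIdx_unique hne h3 h4 h1 h2

lemma cut_iff_offset (hne : ∀ a, σ a ≠ []) {p k : ℕ}
    (h1 : Phi σ u k ≤ p) (h2 : p < Phi σ u (k + 1)) :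
    IsCutP σ u p ↔ p = Phi σ u k := by
  constructor
  · rintro ⟨j, rfl⟩
    rcases Nat.lt_or_ge j (k + 1) with h | h
    · rcases Nat.lt_or_ge j k with h' | h'
      · have h5 := (Phi_strictMono (u := u) hne).monotone (show j + 1 ≤ k by omega)
        have h3 := Phi_lt_succ (u := u) hne j
        omega
      · have : j = k := by omega
        rw [this]
    · have := (Phi_strictMono (u := u) hne).monotone h
      omega
  · rintro rfl
    exact ⟨k, rfl⟩

/-- Advance within a block. -/
lemma bIdx_advance (hne : ∀ a, σ a ≠ []) {p : ℕ} (hcut : ¬IsCutP σ u (p + 1)) :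
    bIdx σ u hne (p + 1) = bIdx σ u hne p ∧
    (p + 1) - Phi σ u (bIdx σ u hne p) = (p - Phi σ u (bIdx σ u hne p)) + 1 ∧
    (p - Phi σ u (bIdx σ u hne p)) + 1 < (σ (u (bIdx σ u hne p))).length := by
  obtain ⟨h1, h2⟩ := bIdx_spec (u := u) hne p
  set k := bIdx σ u hne p
  have hlt : p + 1 < Phi σ u (k + 1) := by
    rcases Nat.lt_or_ge (p + 1) (Phi σ u (k + 1)) with h | h
    · exact h
    · exact absurd ⟨k + 1, by omega⟩ hcut
  have hPhi := Phi_succ (σ := σ) (u := u) k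
  exact ⟨bIdx_eq_of hne (by omega) hlt, by omega, by omega⟩

variable [Nonempty A]

/-- Enter a new block. -/
lemma bIdx_newblock (hne : ∀ a, σ a ≠ []) (hfix : IsFixedPointSubst σ u)
    (hh : Function.Injective fun a => (σ a).head (hne a))
    {p : ℕ} (hcut : IsCutP σ u (p + 1)) :
    bIdx σ u hne (p + 1) = bIdx σ u hne p + 1 ∧
    (p + 1) - Phi σ u (bIdx σ u hne p + 1) = 0 ∧
    u (bIdx σ u hne p + 1) = hinv σ hne (u (p + 1)) ∧
    (p - Phi σ u (bIdx σ u hne p)) + 1 = (σ (u (bIdx σ u hne p))).length := by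
  obtain ⟨h1, h2⟩ := bIdx_spec (u := u) hne p
  set k := bIdx σ u hne p
  have heq : p + 1 = Phi σ u (k + 1) := by
    obtain ⟨j, hj⟩ := hcut
    have hjk : j = k + 1 := by
      by_contra hne2
      rcases Nat.lt_or_ge j (k + 1) with h | h
      · have := (Phi_strictMono (u := u) hne).monotone (show j ≤ k by omega)
        omega
      · have h3 := (Phi_strictMono (u := u) hne).monotone (show k + 1 + 1 ≤ j by omega)
        have h4 := Phi_lt_succ (u := u) hne (k + 1)
        omega
    rw [hjk] at hj
    omega
  have hPhi := Phi_succ (σ := σ) (u := u) k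
  refine ⟨bIdx_eq_of hne (by omega) (by have := Phi_lt_succ (u := u) hne (k+1); omega),
    by omega, ?_, by omega⟩
  rw [heq, u_at_cut hne hfix, hinv_head hh]

/-- The state of the two-tilings machine at a position pair. -/
noncomputable def mstate (σ : A → List A) (u : ℕ → A) (hne : ∀ a, σ a ≠ [])
    (q q' ρ : ℕ) : A × ℕ × A × ℕ :=
  (u (bIdx σ u hne (q + ρ)), (q + ρ) - Phi σ u (bIdx σ u hne (q + ρ)),
   u (bIdx σ u hne (q' + ρ)), (q' + ρ) - Phi σ u (bIdx σ u hne (q' + ρ)))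

/-- The transition map of the machine. -/
noncomputable def mtrans (σ : A → List A) (hne : ∀ a, σ a ≠ []) [Nonempty A] :
    A × ℕ × A × ℕ → A × ℕ × A × ℕ :=
  fun s =>
    ((if s.2.1 + 1 < (σ s.1).length then s.1
        else hinv σ hne ((σ s.2.2.1).getD (s.2.2.2 + 1) (Classical.arbitrary A))),
     (if s.2.1 + 1 < (σ s.1).length then s.2.1 + 1 else 0),
     (if s.2.2.2 + 1 < (σ s.2.2.1).length then s.2.2.1
        else hinv σ hne ((σ s.1).getD (s.2.1 + 1) (Classical.arbitrary A))),
     (if s.2.2.2 + 1 < (σ s.2.2.1).length then s.2.2.2 + 1 else 0))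

lemma u_eq_getD_state (hne : ∀ a, σ a ≠ []) (hfix : IsFixedPointSubst σ u) (p : ℕ) (d : A) :
    u p = (σ (u (bIdx σ u hne p))).getD (p - Phi σ u (bIdx σ u hne p)) d := by
  obtain ⟨h1, h2⟩ := bIdx_spec (u := u) hne p
  set k := bIdx σ u hne p
  have hoff : p - Phi σ u k < (σ (u k)).length := by
    have := Phi_succ (σ := σ) (u := u) k
    omega
  have := block_getElem? hne hfix k (p - Phi σ u k) hoff
  rw [show Phi σ u k + (p - Phi σ u k) = p from by omega] at this
  rw [List.getD_eq_getElem?_getD, this]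
  rfl

lemma mstate_step (hne : ∀ a, σ a ≠ []) (hfix : IsFixedPointSubst σ u)
    (hh : Function.Injective fun a => (σ a).head (hne a))
    {q q' n : ℕ} (hC : ContEq u q q' n)
    (hD : ∀ ρ ≤ n, ¬(IsCutP σ u (q + ρ) ∧ IsCutP σ u (q' + ρ)))
    {ρ : ℕ} (hρ : ρ + 1 < n) :
    mstate σ u hne q q' (ρ + 1) = mtrans σ hne (mstate σ u hne q q' ρ) := by
  have hcontent : u (q + (ρ + 1)) = u (q' + (ρ + 1)) := hC (ρ + 1) hρ
  have harr : q + (ρ + 1) = (q + ρ) + 1 := by omega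
  have harr' : q' + (ρ + 1) = (q' + ρ) + 1 := by omega
  have hDD := hD (ρ + 1) (by omega)
  rw [harr, harr'] at hcontent
  rw [harr] at hDD
  rw [harr'] at hDD
  set p := q + ρ with hp
  set p' := q' + ρ with hp'
  by_cases c1 : IsCutP σ u (p + 1) <;> by_cases c2 : IsCutP σ u (p' + 1)
  · exact absurd ⟨c1, c2⟩ hDD
  · -- side 1 cuts, side 2 advances
    obtain ⟨e1, e2, e3, e4⟩ := bIdx_newblock hne hfix hh c1
    obtain ⟨f1, f2, f3⟩ := bIdx_advance hne (p := p') c2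
    have hval : u (p + 1) = List.getD (σ (u (bIdx σ u hne p')))
        ((p' - Phi σ u (bIdx σ u hne p')) + 1) (Classical.arbitrary A) := by
      rw [hcontent, u_eq_getD_state hne hfix (p' + 1) (Classical.arbitrary A), f1, f2]
    simp only [mstate, mtrans, ← hp, ← hp', harr, harr']
    rw [e1, f1, e2, f2]
    rw [if_neg (by omega), if_neg (by omega), if_pos f3, if_pos f3]
    rw [e3, hval]
  · -- side 2 cuts, side 1 advances
    obtain ⟨e1, e2, e3, e4⟩ := bIdx_newblock hne hfix hh c2
    obtain ⟨f1, f2, f3⟩ := bIdx_advance hne (p := p) c1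
    have hval : u (p' + 1) = List.getD (σ (u (bIdx σ u hne p)))
        ((p - Phi σ u (bIdx σ u hne p)) + 1) (Classical.arbitrary A) := by
      rw [← hcontent, u_eq_getD_state hne hfix (p + 1) (Classical.arbitrary A), f1, f2]
    simp only [mstate, mtrans, ← hp, ← hp', harr, harr']
    rw [e1, f1, e2, f2]
    rw [if_pos f3, if_pos f3, if_neg (by omega), if_neg (by omega)]
    rw [e3, hval]
  · -- both advance
    obtain ⟨f1, f2, f3⟩ := bIdx_advance hne (p := p) c1
    obtain ⟨g1, g2, g3⟩ := bIdx_advance hne (p := p') c2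
    simp only [mstate, mtrans, ← hp, ← hp', harr, harr']
    rw [f1, g1, f2, g2]
    rw [if_pos f3, if_pos f3, if_pos g3, if_pos g3]

end Machine

section Stagger

variable [Fintype A] [DecidableEq A] [Nonempty A] {σ : A → List A} {u : ℕ → A}

/-- Bound for the number of machine states. -/
def SB (σ : A → List A) [Fintype A] : ℕ :=
  Fintype.card A * (Mlen σ * (Fintype.card A * Mlen σ))

lemma mstate_propagate (hne : ∀ a, σ a ≠ []) (hfix : IsFixedPointSubst σ u)
    (hh : Function.Injective fun a => (σ a).head (hne a))
    {q q' n : ℕ} (hC : ContEq u q q' n)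
    (hD : ∀ ρ ≤ n, ¬(IsCutP σ u (q + ρ) ∧ IsCutP σ u (q' + ρ)))
    {ρ₁ ρ₂ : ℕ} (h12 : ρ₁ < ρ₂)
    (heq : mstate σ u hne q q' ρ₁ = mstate σ u hne q q' ρ₂) :
    ∀ i, ρ₂ + i < n → mstate σ u hne q q' (ρ₁ + i) = mstate σ u hne q q' (ρ₂ + i) := by
  intro i
  induction i with
  | zero => intro _; simpa using heq
  | succ i ih =>
    intro h
    have h1 : ρ₂ + i < n := by omega
    have e1 := mstate_step hne hfix hh hC hD (ρ := ρ₁ + i) (by omega)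
    have e2 := mstate_step hne hfix hh hC hD (ρ := ρ₂ + i) (by omega)
    rw [show ρ₁ + (i + 1) = (ρ₁ + i) + 1 from by omega, e1,
      show ρ₂ + (i + 1) = (ρ₂ + i) + 1 from by omega, e2, ih h1]

lemma letter_of_mstate (hne : ∀ a, σ a ≠ []) (hfix : IsFixedPointSubst σ u)
    {q q' ρ ρ' : ℕ}
    (h : mstate σ u hne q q' ρ = mstate σ u hne q q' ρ') : u (q + ρ) = u (q + ρ') := by
  have h1 := u_eq_getD_state hne hfix (q + ρ) (Classical.arbitrary A)
  have h2 := u_eq_getD_state hne hfix (q + ρ') (Classical.arbitrary A)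
  have c1 : u (bIdx σ u hne (q + ρ)) = u (bIdx σ u hne (q + ρ')) :=
    congrArg (fun s => s.1) h
  have c2 : (q + ρ) - Phi σ u (bIdx σ u hne (q + ρ))
      = (q + ρ') - Phi σ u (bIdx σ u hne (q + ρ')) :=
    congrArg (fun s => s.2.1) h
  rw [h1, h2, c1, c2]

lemma stagger_period (hne : ∀ a, σ a ≠ []) (hfix : IsFixedPointSubst σ u)
    (hh : Function.Injective fun a => (σ a).head (hne a))
    {q q' n : ℕ} (hC : ContEq u q q' n)
    (hD : ∀ ρ ≤ n, ¬(IsCutP σ u (q + ρ) ∧ IsCutP σ u (q' + ρ))) :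
    ∃ ρ₁ ρ₂, ρ₁ < ρ₂ ∧ ρ₂ ≤ SB σ ∧
      ∀ i, ρ₂ + i < n → u (q + (ρ₁ + i)) = u (q + (ρ₂ + i)) := by
  classical
  set t : Finset (A × ℕ × A × ℕ) :=
    Finset.univ ×ˢ (Finset.range (Mlen σ) ×ˢ (Finset.univ ×ˢ Finset.range (Mlen σ))) with ht
  have hoffM : ∀ p : ℕ, p - Phi σ u (bIdx σ u hne p) < Mlen σ := by
    intro p
    obtain ⟨h1, h2⟩ := bIdx_spec (u := u) hne p
    have h3 := Phi_succ (σ := σ) (u := u) (bIdx σ u hne p)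
    have h4 := length_le_Mlen σ (u (bIdx σ u hne p))
    omega
  have hmaps : ∀ ρ ∈ Finset.range (SB σ + 1), mstate σ u hne q q' ρ ∈ t := by
    intro ρ _
    simp only [ht, Finset.mem_product, Finset.mem_univ, Finset.mem_range, true_and]
    exact ⟨hoffM _, hoffM _⟩
  have hcard : t.card < (Finset.range (SB σ + 1)).card := by
    simp only [ht, Finset.card_product, Finset.card_range, Finset.card_univ]
    simp [SB]
  obtain ⟨x, hx, y, hy, hxy, hfxy⟩ :=
    Finset.exists_ne_map_eq_of_card_lt_of_maps_to hcard hmaps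
  simp only [Finset.mem_range] at hx hy
  rcases Nat.lt_or_ge x y with hlt | hge
  · exact ⟨x, y, hlt, by omega,
      fun i hi => letter_of_mstate hne hfix (mstate_propagate hne hfix hh hC hD hlt hfxy i hi)⟩
  · have hlt : y < x := by omega
    exact ⟨y, x, hlt, by omega,
      fun i hi => letter_of_mstate hne hfix (mstate_propagate hne hfix hh hC hD hlt hfxy.symm i hi)⟩

end Stagger

section Powers

variable [Fintype A] [DecidableEq A] [Nonempty A] {σ : A → List A} {u : ℕ → A}

lemma periodic_of_subsingleton (h : Fintype.card A ≤ 1) : PeriodicSeq u := by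
  refine ⟨1, one_pos, fun n => ?_⟩
  haveI := Fintype.card_le_one_iff.1 h
  exact this _ _

lemma two_le_card (hnp : ¬PeriodicSeq u) : 2 ≤ Fintype.card A := by
  by_contra h
  exact hnp (periodic_of_subsingleton (by omega))

lemma two_le_block (hprim1 : ∀ a b : A, b ∈ σ a) (hA : 2 ≤ Fintype.card A) (a : A) :
    2 ≤ (σ a).length := by
  obtain ⟨b, c, hbc⟩ := Fintype.exists_pair_of_one_lt_card (α := A) (by omega)
  have hb := hprim1 a b
  have hc := hprim1 a c
  match hl : σ a with
  | [] => rw [hl] at hb; simp at hb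
  | [x] => rw [hl] at hb hc; simp at hb hc; exact absurd (hb.trans hc.symm) hbc
  | x :: y :: l => simp

lemma doubling (hprim1 : ∀ a b : A, b ∈ σ a) (hA : 2 ≤ Fintype.card A) :
    ∀ N a, 2 ^ N ≤ ((wordMap σ)^[N] [a]).length := by
  intro N
  induction N with
  | zero => intro a; simp
  | succ N ih =>
    intro a
    have h2 := two_le_block hprim1 hA a
    have hit : (wordMap σ)^[N + 1] [a] = (wordMap σ)^[N] (σ a) := by
      rw [Function.iterate_succ_apply]
      simp
    match hl : σ a with
    | [] => rw [hl] at h2; simp at h2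
    | [x] => rw [hl] at h2; simp at h2
    | x :: y :: l =>
      rw [hit, hl, show x :: y :: l = [x] ++ ([y] ++ l) from rfl,
        wordMap_iterate_append, wordMap_iterate_append]
      have hx := ih x
      have hy := ih y
      simp only [List.length_append]
      have h3 : 2 ^ (N + 1) = 2 ^ N + 2 ^ N := by ring
      omega

lemma iterate_infix_mono (N : ℕ) {w v : List A} (h : w <:+: v) :
    (wordMap σ)^[N] w <:+: (wordMap σ)^[N] v := by
  obtain ⟨s, t, rfl⟩ := h
  exact ⟨(wordMap σ)^[N] s, (wordMap σ)^[N] t,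
    by rw [← wordMap_iterate_append, ← wordMap_iterate_append]⟩

lemma prefix_infix_block (hne : ∀ a, σ a ≠ []) (hfix : IsFixedPointSubst σ u)
    (hprim1 : ∀ a b : A, b ∈ σ a) (hA : 2 ≤ Fintype.card A)
    (n N : ℕ) (hn : n ≤ 2 ^ N) (a : A) :
    prefixWord u n <:+: (wordMap σ)^[N + 1] [a] := by
  obtain ⟨k', hk', himg⟩ := iterate_prefix_image hne hfix N 1
  have h1 : prefixWord u 1 = [u 0] := by
    simp [prefixWord, List.range_succ]
  rw [h1] at himg
  have hlen : n ≤ k' := by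
    have hd := doubling hprim1 hA N (u 0)
    rw [himg] at hd
    simp at hd
    omega
  have hpre : prefixWord u n <+: (wordMap σ)^[N] [u 0] := by
    rw [himg]
    exact prefixWord_prefix u hlen
  have hmem : [u 0] <:+: σ a := by
    obtain ⟨s, t, hst⟩ := List.append_of_mem (hprim1 a (u 0))
    exact ⟨s, t, by rw [hst]; simp⟩
  have hmono := iterate_infix_mono (σ := σ) N hmem
  have hstep : (wordMap σ)^[N] (σ a) = (wordMap σ)^[N + 1] [a] := by
    rw [Function.iterate_succ_apply]
    simp
  rw [hstep] at hmono
  exact hpre.isInfix.trans hmono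

lemma occ_of_infix_bounds {v : ℕ → A} {w : List A} {a b : ℕ}
    (h : w <:+: factorAt v a b) :
    ∃ p₀, a ≤ p₀ ∧ p₀ + w.length ≤ a + b ∧ w = factorAt v p₀ w.length := by
  obtain ⟨s, t, hst⟩ := h
  have hlen : s.length + w.length ≤ b := by
    have := congrArg List.length hst
    simp at this
    omega
  refine ⟨a + s.length, by omega, by omega, ?_⟩
  apply List.ext_getElem?
  intro j
  rcases lt_or_ge j w.length with hj | hj
  · rw [factorAt_getElem? _ _ _ _ hj]
    have h1 : (factorAt v a b)[s.length + j]? = some (v (a + (s.length + j))) :=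
      factorAt_getElem? _ _ _ _ (by omega)
    rw [← hst] at h1
    rw [List.getElem?_append_left (by simp; omega)] at h1
    rw [List.getElem?_append_right (by omega)] at h1
    rw [show s.length + j - s.length = j from by omega] at h1
    rw [h1]
    congr 2
    omega
  · rw [getElem?_none_of_ge hj, getElem?_none_of_ge (by simpa using hj)]

lemma stretch_gives_prefix_period (hne : ∀ a, σ a ≠ []) (hfix : IsFixedPointSubst σ u)
    (hprim1 : ∀ a b : A, b ∈ σ a) (hA : 2 ≤ Fintype.card A)
    {Q ℓ π n : ℕ}
    (hstretch : ∀ i, i + π < ℓ → u (Q + i + π) = u (Q + i))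
    (N : ℕ) (hn2 : n ≤ 2 ^ N)
    (hℓ : 2 * Mlen (fun a => (wordMap σ)^[N + 1] [a]) + n ≤ ℓ) :
    ∀ j, j + π < n → u (j + π) = u j := by
  classical
  set τ : A → List A := fun a => (wordMap σ)^[N + 1] [a] with hτ
  have hneτ : ∀ a, τ a ≠ [] := fun a => iterate_ne_nil hne (N + 1) a
  have hfixτ : IsFixedPointSubst τ u := isFixedPoint_power hne hfix (N + 1)
  set MN := Mlen τ with hMNdef
  have hex : ∃ k, Q ≤ Phi τ u k := ⟨Q, le_Phi hneτ Q⟩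
  set k := Nat.find hex with hk
  have hk1 : Q ≤ Phi τ u k := Nat.find_spec hex
  have hk2 : Phi τ u k ≤ Q + MN := by
    rcases Nat.eq_zero_or_pos k with h0 | h0
    · rw [h0]
      simp
    · have hkm := Nat.find_min hex (show k - 1 < k by omega)
      push_neg at hkm
      have hps := Phi_succ (σ := τ) (u := u) (k - 1)
      have hMN : (τ (u (k - 1))).length ≤ MN := length_le_Mlen τ _
      rw [show k - 1 + 1 = k from by omega] at hps
      omega
  have hps := Phi_succ (σ := τ) (u := u) k
  have hMN : (τ (u k)).length ≤ MN := length_le_Mlen τ _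
  have hblock := factorAt_block hneτ hfixτ k
  have hpre : prefixWord u n <:+: τ (u k) :=
    prefix_infix_block hne hfix hprim1 hA n N hn2 (u k)
  rw [← hblock] at hpre
  obtain ⟨p₀, hp1, hp2, hp3⟩ := occ_of_infix_bounds hpre
  rw [length_prefixWord] at hp2 hp3
  have hocc : ∀ j < n, u j = u (p₀ + j) := by
    intro j hj
    have he : factorAt u 0 n = factorAt u p₀ n := by
      rw [← prefixWord_eq_factorAt]
      exact hp3
    have := (factorAt_eq_iff u).1 he j hj
    simpa using this
  intro j hjπ
  have h1 : u j = u (p₀ + j) := hocc j (by omega)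
  have h2 : u (j + π) = u (p₀ + j + π) := by
    have := hocc (j + π) (by omega)
    rw [show p₀ + (j + π) = p₀ + j + π from by omega] at this
    exact this
  have h3 : u (p₀ + j + π) = u (p₀ + j) := by
    have hi := hstretch (p₀ + j - Q) (by omega)
    rw [show Q + (p₀ + j - Q) + π = p₀ + j + π from by omega,
      show Q + (p₀ + j - Q) = p₀ + j from by omega] at hi
    exact hi
  rw [h2, h3, ← h1]

/-- Prefix periodicity predicate. -/
def PP (u : ℕ → A) (π n : ℕ) : Prop := ∀ j, j + π < n → u (j + π) = u j

lemma periodic_of_stretches (hne : ∀ a, σ a ≠ []) (hfix : IsFixedPointSubst σ u)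
    (hprim1 : ∀ a b : A, b ∈ σ a) (hA : 2 ≤ Fintype.card A)
    (h : ∀ m, ∃ π Q ℓ, 1 ≤ π ∧ π ≤ SB σ ∧ m ≤ ℓ ∧
      ∀ i, i + π < ℓ → u (Q + i + π) = u (Q + i)) :
    PeriodicSeq u := by
  classical
  have hPP : ∀ n, ∃ π, 1 ≤ π ∧ π ≤ SB σ ∧ PP u π n := by
    intro n
    have hn2 : n ≤ 2 ^ n := le_of_lt (Nat.lt_two_pow_self (n := n))
    obtain ⟨π, Q, ℓ, h1, h2, h3, h4⟩ := h (2 * Mlen (fun a => (wordMap σ)^[n + 1] [a]) + n)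
    exact ⟨π, h1, h2, stretch_gives_prefix_period hne hfix hprim1 hA h4 n hn2 h3⟩
  have hmono : ∀ π n n', n ≤ n' → PP u π n' → PP u π n :=
    fun π n n' hnn hp j hj => hp j (by omega)
  by_contra hnp
  have hall : ∀ π, 1 ≤ π → π ≤ SB σ → ∃ n, ¬PP u π n := by
    intro π h1 h2
    by_contra hno
    push_neg at hno
    refine hnp ⟨π, h1, fun n => ?_⟩
    exact hno (n + π + 1) n (by omega)
  choose f hf using hall
  set F : ℕ → ℕ := fun π => if h : 1 ≤ π ∧ π ≤ SB σ then f π h.1 h.2 else 0 with hF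
  set Nmax := (Finset.range (SB σ + 1)).sup F + 1 with hN
  obtain ⟨π, h1, h2, h3⟩ := hPP Nmax
  have hFπ : ¬PP u π (f π h1 h2) := hf π h1 h2
  have hle : f π h1 h2 ≤ Nmax := by
    have hsup : F π ≤ (Finset.range (SB σ + 1)).sup F :=
      Finset.le_sup (Finset.mem_range.2 (by omega))
    have hFeq : F π = f π h1 h2 := by
      rw [hF]
      simp only [dif_pos (show 1 ≤ π ∧ π ≤ SB σ from ⟨h1, h2⟩)]
    rw [hFeq] at hsup
    omega
  exact hFπ (hmono π _ _ hle h3)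

/-- Recognizability: all long enough equal windows have the same relative cut pattern. -/
lemma recog (hne : ∀ a, σ a ≠ []) (hfix : IsFixedPointSubst σ u)
    (hh : Function.Injective fun a => (σ a).head (hne a))
    (hl : Function.Injective fun a => (σ a).getLast (hne a))
    (hprim1 : ∀ a b : A, b ∈ σ a) (hnp : ¬PeriodicSeq u) :
    ∃ L, ∀ n q q', L < n → ContEq u q q' n → SameCuts σ u q q' n := by
  have hA := two_le_card (u := u) hnp
  by_contra hcon
  push_neg at hcon
  refine hnp (periodic_of_stretches hne hfix hprim1 hA ?_)
  intro m
  obtain ⟨n, q, q', hn, hC, hS⟩ := hcon (m + SB σ + 1)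
  have hD : ∀ ρ ≤ n, ¬(IsCutP σ u (q + ρ) ∧ IsCutP σ u (q' + ρ)) := by
    rintro ρ hρ ⟨hc, hc'⟩
    exact hS (sync hne hfix hh hl hC hρ hc hc')
  obtain ⟨ρ₁, ρ₂, h12, hρ₂, hper⟩ := stagger_period hne hfix hh hC hD
  refine ⟨ρ₂ - ρ₁, q + ρ₁, n - ρ₁, by omega, by omega, by omega, ?_⟩
  intro i hi
  have hp := hper i (by omega)
  rw [show q + ρ₁ + i + (ρ₂ - ρ₁) = q + (ρ₂ + i) from by omega,
    show q + ρ₁ + i = q + (ρ₁ + i) from by omega]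
  exact hp.symm

end Powers

section WordComb

variable [Fintype A] [DecidableEq A] [Nonempty A] {σ : A → List A} {u : ℕ → A}

lemma wordMap_injective (hne : ∀ a, σ a ≠ [])
    (hh : Function.Injective fun a => (σ a).head (hne a)) :
    Function.Injective (wordMap σ) := by
  intro x
  induction x with
  | nil =>
    intro y h
    cases y with
    | nil => rfl
    | cons b y =>
      exfalso
      rw [wordMap_cons] at h
      have hlen := congrArg List.length h
      have := List.length_pos_iff.2 (hne b)
      simp only [wordMap_nil, List.length_nil, List.length_append] at hlen
      omega
  | cons a x ih =>
    intro y h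
    cases y with
    | nil =>
      exfalso
      rw [wordMap_cons] at h
      have hlen := congrArg List.length h
      have := List.length_pos_iff.2 (hne a)
      simp only [wordMap_nil, List.length_nil, List.length_append] at hlen
      omega
    | cons b y =>
      rw [wordMap_cons, wordMap_cons] at h
      have hab : a = b := by
        apply hh
        have h0 := congrArg (fun l => l[0]?) h
        rw [List.getElem?_append_left (List.length_pos_iff.2 (hne a)),
          List.getElem?_append_left (List.length_pos_iff.2 (hne b)),
          head_getElem? _ (hne a), head_getElem? _ (hne b)] at h0
        simpa using h0
      subst hab
      have h2 : wordMap σ x = wordMap σ y := by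
        have := List.append_cancel_left h
        exact this
      rw [ih h2]

lemma wordMap_prefix_cancel (hne : ∀ a, σ a ≠ [])
    (hh : Function.Injective fun a => (σ a).head (hne a)) :
    ∀ {x y : List A}, wordMap σ x <+: wordMap σ y → x <+: y := by
  intro x
  induction x with
  | nil => intro y _; exact List.nil_prefix
  | cons a x ih =>
    intro y h
    cases y with
    | nil =>
      exfalso
      rw [wordMap_cons] at h
      have hlen := h.length_le
      have := List.length_pos_iff.2 (hne a)
      simp only [wordMap_nil, List.length_nil, List.length_append, Nat.le_zero] at hlen
      omega
    | cons b y =>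
      rw [wordMap_cons, wordMap_cons] at h
      have hab : a = b := by
        apply hh
        obtain ⟨t, ht⟩ := h
        have h0 := congrArg (fun l => l[0]?) ht
        rw [List.append_assoc] at h0
        rw [List.getElem?_append_left (List.length_pos_iff.2 (hne a)),
          List.getElem?_append_left (List.length_pos_iff.2 (hne b)),
          head_getElem? _ (hne a), head_getElem? _ (hne b)] at h0
        simpa using h0
      subst hab
      have h2 : wordMap σ x <+: wordMap σ y := by
        rwa [List.prefix_append_right_inj] at h
      exact List.cons_prefix_cons.2 ⟨rfl, ih h2⟩

/-- The reversed substitution. -/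
def rev (σ : A → List A) : A → List A := fun a => (σ a).reverse

lemma rev_ne (hne : ∀ a, σ a ≠ []) : ∀ a, rev σ a ≠ [] := by
  intro a
  simp [rev, hne a]

lemma wordMap_rev (σ : A → List A) (w : List A) :
    (wordMap σ w).reverse = wordMap (rev σ) w.reverse := by
  induction w with
  | nil => simp
  | cons a w ih =>
    rw [wordMap_cons, List.reverse_append, ih, List.reverse_cons, wordMap_append]
    simp [rev]

lemma head_rev (hne : ∀ a, σ a ≠ []) (a : A) :
    (rev σ a).head (rev_ne hne a) = (σ a).getLast (hne a) := by
  have h1 : (rev σ a).head? = (σ a).getLast? := by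
    simp [rev]
  rw [List.head?_eq_head (rev_ne hne a), List.getLast?_eq_getLast (hne a)] at h1
  exact Option.some.inj h1

lemma rev_head_injective (hne : ∀ a, σ a ≠ [])
    (hl : Function.Injective fun a => (σ a).getLast (hne a)) :
    Function.Injective fun a => (rev σ a).head (rev_ne hne a) := by
  have : (fun a => (rev σ a).head (rev_ne hne a)) = fun a => (σ a).getLast (hne a) :=
    funext fun a => head_rev hne a
  rw [this]
  exact hl

lemma wordMap_suffix_cancel (hne : ∀ a, σ a ≠ [])
    (hl : Function.Injective fun a => (σ a).getLast (hne a)) :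
    ∀ {x y : List A}, wordMap σ x <:+ wordMap σ y → x <:+ y := by
  intro x y h
  have h1 : (wordMap σ x).reverse <+: (wordMap σ y).reverse := List.reverse_prefix.2 h
  rw [wordMap_rev, wordMap_rev] at h1
  have h2 := wordMap_prefix_cancel (rev_ne hne) (rev_head_injective hne hl) h1
  exact List.reverse_prefix.1 h2

lemma length_iterate_eq_sum (σ : A → List A) (k : ℕ) (w : List A) :
    ((wordMap σ)^[k] w).length = (w.map fun c => ((wordMap σ)^[k] [c]).length).sum := by
  induction w with
  | nil => simp
  | cons c w ih =>
    rw [show c :: w = [c] ++ w from rfl, wordMap_iterate_append]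
    simp only [List.length_append, List.map_append, List.sum_append, ih]
    simp

lemma balance (hne : ∀ a, σ a ≠ []) (hprim1 : ∀ a b : A, b ∈ σ a) :
    ∀ k a b, ((wordMap σ)^[k] [a]).length ≤ Mlen σ * ((wordMap σ)^[k] [b]).length := by
  have hM1 : 1 ≤ Mlen σ := by
    have := length_le_Mlen σ (Classical.arbitrary A)
    have := List.length_pos_iff.2 (hne (Classical.arbitrary A))
    omega
  intro k a b
  cases k with
  | zero =>
    simp only [Function.iterate_zero, id_eq, List.length_singleton]
    omega
  | succ k =>
    obtain ⟨cstar, _, hcstar⟩ := Finset.exists_max_image Finset.univ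
      (fun c => ((wordMap σ)^[k] [c]).length) ⟨Classical.arbitrary A, Finset.mem_univ _⟩
    have ha : ((wordMap σ)^[k + 1] [a]).length
        ≤ (σ a).length * ((wordMap σ)^[k] [cstar]).length := by
      rw [Function.iterate_succ_apply, wordMap_singleton, length_iterate_eq_sum]
      have := List.sum_le_card_nsmul ((σ a).map fun c => ((wordMap σ)^[k] [c]).length)
        (((wordMap σ)^[k] [cstar]).length) ?bound
      case bound =>
        intro x hx
        obtain ⟨c, _, rfl⟩ := List.mem_map.1 hx
        exact hcstar c (Finset.mem_univ c)
      rw [smul_eq_mul, List.length_map] at this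
      exact this
    have hb : ((wordMap σ)^[k] [cstar]).length ≤ ((wordMap σ)^[k + 1] [b]).length := by
      have hrw : ((wordMap σ)^[k + 1] [b]).length
          = ((σ b).map fun c => ((wordMap σ)^[k] [c]).length).sum := by
        rw [Function.iterate_succ_apply, wordMap_singleton, length_iterate_eq_sum]
      rw [hrw]
      exact List.single_le_sum (fun x _ => Nat.zero_le x) _
        (List.mem_map_of_mem (hprim1 b cstar))
    calc ((wordMap σ)^[k + 1] [a]).length
        ≤ (σ a).length * ((wordMap σ)^[k] [cstar]).length := ha
      _ ≤ Mlen σ * ((wordMap σ)^[k] [cstar]).length :=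
          Nat.mul_le_mul_right _ (length_le_Mlen σ a)
      _ ≤ Mlen σ * ((wordMap σ)^[k + 1] [b]).length :=
          Nat.mul_le_mul_left _ hb

lemma length_wordMap_ge_two (h2 : ∀ a, 2 ≤ (σ a).length) (x : List A) :
    2 * x.length ≤ (wordMap σ x).length := by
  induction x with
  | nil => simp
  | cons a x ih =>
    rw [wordMap_cons]
    have := h2 a
    simp only [List.length_append, List.length_cons]
    omega

end WordComb

section Structure

variable [Fintype A] [DecidableEq A] [Nonempty A] {σ : A → List A} {u : ℕ → A}

lemma cut_in_window (hne : ∀ a, σ a ≠ []) (q : ℕ) :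
    ∃ ρ, ρ ≤ Mlen σ ∧ IsCutP σ u (q + ρ) := by
  obtain ⟨h1, h2⟩ := bIdx_spec (u := u) hne q
  set k := bIdx σ u hne q
  have hps := Phi_succ (σ := σ) (u := u) k
  have hM := length_le_Mlen σ (u k)
  exact ⟨Phi σ u (k + 1) - q, by omega, ⟨k + 1, by omega⟩⟩

lemma snoc_occ {u : ℕ → A} {W : List A} {b : A} (h : W ++ [b] ∈ Lang u) :
    ∃ q, W = factorAt u q W.length ∧ u (q + W.length) = b := by
  obtain ⟨q, hq⟩ := h
  rw [List.length_append, List.length_singleton, factorAt_succ_right] at hq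
  obtain ⟨h1, h2⟩ := List.append_inj' hq rfl
  refine ⟨q, h1, ?_⟩
  injection h2 with h3
  exact h3.symm

lemma cons_occ {u : ℕ → A} {W : List A} {a : A} (h : a :: W ∈ Lang u) :
    ∃ q, W = factorAt u (q + 1) W.length ∧ u q = a := by
  obtain ⟨q, hq⟩ := h
  rw [List.length_cons, factorAt_succ_left] at hq
  injection hq with h1 h2
  exact ⟨q, h2, h1.symm⟩

lemma bispecial_structure (hne : ∀ a, σ a ≠ []) (hfix : IsFixedPointSubst σ u)
    (hh : Function.Injective fun a => (σ a).head (hne a))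
    (hl : Function.Injective fun a => (σ a).getLast (hne a))
    (hprim1 : ∀ a b : A, b ∈ σ a) (hnp : ¬PeriodicSeq u) :
    ∃ L₁, ∀ W : List A, Bispecial u W → L₁ < W.length →
      ∃ x, x ∈ Lang u ∧ Bispecial u x ∧ W = wordMap σ x ∧ x ≠ [] := by
  classical
  obtain ⟨L, hL⟩ := recog hne hfix hh hl hprim1 hnp
  refine ⟨L + Mlen σ + 1, ?_⟩
  intro W hBis hlen
  obtain ⟨b, c, hbc, hWb, hWc⟩ := hBis.1
  obtain ⟨a₁, a₂, ha12, hW1, hW2⟩ := hBis.2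
  obtain ⟨q₁, hq₁, hbv⟩ := snoc_occ hWb
  obtain ⟨q₂, hq₂, hcv⟩ := snoc_occ hWc
  obtain ⟨r₁, hr₁, ha₁⟩ := cons_occ hW1
  obtain ⟨r₂, hr₂, ha₂⟩ := cons_occ hW2
  set n := W.length with hn
  have hnL : L < n := by omega
  have hnM : Mlen σ ≤ n := by omega
  have hn1 : 1 ≤ n := by omega
  have hC12 : ContEq u q₁ q₂ n := (factorAt_eq_iff u).1 (by rw [← hq₁, ← hq₂])
  have hC13 : ContEq u q₁ (r₁ + 1) n := (factorAt_eq_iff u).1 (by rw [← hq₁, ← hr₁])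
  have hC14 : ContEq u q₁ (r₂ + 1) n := (factorAt_eq_iff u).1 (by rw [← hq₁, ← hr₂])
  have hS12 := hL n q₁ q₂ hnL hC12
  have hS13 := hL n q₁ (r₁ + 1) hnL hC13
  have hS14 := hL n q₁ (r₂ + 1) hnL hC14
  -- ===== right end is a cut =====
  have hcutn : IsCutP σ u (q₁ + n) := by
    by_contra hnc
    set P : ℕ → Prop := fun ρ => IsCutP σ u (q₁ + ρ) with hP
    obtain ⟨ρ₀, hρ₀M, hρ₀⟩ := cut_in_window (u := u) hne q₁
    set ρp := Nat.findGreatest P n with hρp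
    have hspec : P ρp := Nat.findGreatest_spec (m := ρ₀) (by omega) hρ₀
    have hmax : ∀ r, ρp < r → r ≤ n → ¬P r := fun r hr1 hr2 =>
      Nat.findGreatest_is_greatest hr1 hr2
    have hρpn : ρp ≤ n := Nat.findGreatest_le n
    have hρplt : ρp < n := by
      rcases Nat.lt_or_ge ρp n with h | h
      · exact h
      · exact absurd (show IsCutP σ u (q₁ + n) from by
          have h9 : ρp = n := by omega
          rwa [h9] at hspec) hnc
    obtain ⟨k, hk⟩ := hspec
    have hlast : q₁ + n < Phi σ u (k + 1) := by
      by_contra hcon2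
      push_neg at hcon2
      have h5 := Phi_lt_succ (u := u) hne k
      exact hmax (Phi σ u (k + 1) - q₁) (by omega) (by omega) ⟨k + 1, by omega⟩
    have hps := Phi_succ (σ := σ) (u := u) k
    have hoff : n - ρp < (σ (u k)).length := by omega
    have hbeq := block_getElem? hne hfix k (n - ρp) hoff
    rw [show Phi σ u k + (n - ρp) = q₁ + n from by omega] at hbeq
    have hcut2 : IsCutP σ u (q₂ + ρp) := (hS12 ρp (by omega)).1 ⟨k, hk⟩
    obtain ⟨k', hk'⟩ := hcut2
    have hlast2 : q₂ + n < Phi σ u (k' + 1) := by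
      by_contra hcon2
      push_neg at hcon2
      have h5 := Phi_lt_succ (u := u) hne k'
      have hc' : IsCutP σ u (q₂ + (Phi σ u (k' + 1) - q₂)) := ⟨k' + 1, by omega⟩
      have h6 := (hS12 (Phi σ u (k' + 1) - q₂) (by omega)).2 hc'
      exact hmax (Phi σ u (k' + 1) - q₂) (by omega) (by omega) h6
    have hps2 := Phi_succ (σ := σ) (u := u) k'
    have hoff2 : n - ρp < (σ (u k')).length := by omega
    have hceq := block_getElem? hne hfix k' (n - ρp) hoff2
    rw [show Phi σ u k' + (n - ρp) = q₂ + n from by omega] at hceq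
    have hhost : u k = u k' := by
      apply hh
      have h1 : u (Phi σ u k) = u (Phi σ u k') := by
        rw [hk, hk']
        exact hC12 ρp (by omega)
      rw [u_at_cut hne hfix, u_at_cut hne hfix] at h1
      exact h1
    rw [hhost, hceq] at hbeq
    have h8 := Option.some.inj hbeq
    rw [hbv, hcv] at h8
    exact hbc h8.symm
  -- ===== left end is a cut =====
  have hcutr : IsCutP σ u (r₁ + 1) := by
    by_contra hnc
    obtain ⟨ρ₀, hρ₀M, hρ₀⟩ := cut_in_window (u := u) hne (r₁ + 1)
    have hex : ∃ ρ, IsCutP σ u ((r₁ + 1) + ρ) := ⟨ρ₀, hρ₀⟩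
    set ρm := Nat.find hex with hρm
    have hspec : IsCutP σ u ((r₁ + 1) + ρm) := Nat.find_spec hex
    have hmin : ∀ r < ρm, ¬IsCutP σ u ((r₁ + 1) + r) := fun r hr => Nat.find_min hex hr
    have hρmM : ρm ≤ Mlen σ := le_trans (Nat.find_min' hex hρ₀) hρ₀M
    have hρm1 : 1 ≤ ρm := by
      rcases Nat.eq_zero_or_pos ρm with h0 | h0
      · exact absurd (show IsCutP σ u (r₁ + 1) from by
          have h9 := hspec
          rw [h0] at h9
          simpa using h9) hnc
      · exact h0
    obtain ⟨k, hk⟩ := hspec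
    have hk1 : 1 ≤ k := by
      rcases Nat.eq_zero_or_pos k with h0 | h0
      · exfalso
        rw [h0] at hk
        simp at hk
        omega
      · exact h0
    have hps := Phi_succ (σ := σ) (u := u) (k - 1)
    rw [show k - 1 + 1 = k from by omega] at hps
    have hlenpos := List.length_pos_iff.2 (hne (u (k - 1)))
    have hprev : Phi σ u (k - 1) ≤ r₁ := by
      by_contra hcon2
      push_neg at hcon2
      exact hmin (Phi σ u (k - 1) - (r₁ + 1)) (by omega) ⟨k - 1, by omega⟩
    have hoff : r₁ - Phi σ u (k - 1) < (σ (u (k - 1))).length := by omega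
    have hval₁ := block_getElem? hne hfix (k - 1) (r₁ - Phi σ u (k - 1)) hoff
    rw [show Phi σ u (k - 1) + (r₁ - Phi σ u (k - 1)) = r₁ from by omega] at hval₁
    have hhost₁ : (σ (u (k - 1))).getLast (hne _) = u (r₁ + ρm) := by
      have h7 := u_before_cut hne hfix (k - 1)
      rw [show k - 1 + 1 = k from by omega, hk,
        show r₁ + 1 + ρm - 1 = r₁ + ρm from by omega] at h7
      exact h7.symm
    have hoffeq : r₁ - Phi σ u (k - 1) = (σ (u (k - 1))).length - ρm - 1 := by omega
    have hS34 : SameCuts σ u (r₁ + 1) (r₂ + 1) n := fun ρ hρ =>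
      (hS13 ρ hρ).symm.trans (hS14 ρ hρ)
    have hC34 : ContEq u (r₁ + 1) (r₂ + 1) n := fun ρ hρ =>
      (hC13 ρ hρ).symm.trans (hC14 ρ hρ)
    have hcut2 : IsCutP σ u ((r₂ + 1) + ρm) := (hS34 ρm (by omega)).1 ⟨k, hk⟩
    obtain ⟨k', hk'⟩ := hcut2
    have hk1' : 1 ≤ k' := by
      rcases Nat.eq_zero_or_pos k' with h0 | h0
      · exfalso
        rw [h0] at hk'
        simp at hk'
        omega
      · exact h0
    have hps' := Phi_succ (σ := σ) (u := u) (k' - 1)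
    rw [show k' - 1 + 1 = k' from by omega] at hps'
    have hlenpos' := List.length_pos_iff.2 (hne (u (k' - 1)))
    have hprev' : Phi σ u (k' - 1) ≤ r₂ := by
      by_contra hcon2
      push_neg at hcon2
      have hc' : IsCutP σ u ((r₂ + 1) + (Phi σ u (k' - 1) - (r₂ + 1))) :=
        ⟨k' - 1, by omega⟩
      have h6 := (hS34 (Phi σ u (k' - 1) - (r₂ + 1)) (by omega)).2 hc'
      exact hmin (Phi σ u (k' - 1) - (r₂ + 1)) (by omega) h6
    have hoff' : r₂ - Phi σ u (k' - 1) < (σ (u (k' - 1))).length := by omega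
    have hval₂ := block_getElem? hne hfix (k' - 1) (r₂ - Phi σ u (k' - 1)) hoff'
    rw [show Phi σ u (k' - 1) + (r₂ - Phi σ u (k' - 1)) = r₂ from by omega] at hval₂
    have hhost₂ : (σ (u (k' - 1))).getLast (hne _) = u (r₂ + ρm) := by
      have h7 := u_before_cut hne hfix (k' - 1)
      rw [show k' - 1 + 1 = k' from by omega, hk',
        show r₂ + 1 + ρm - 1 = r₂ + ρm from by omega] at h7
      exact h7.symm
    have hoffeq' : r₂ - Phi σ u (k' - 1) = (σ (u (k' - 1))).length - ρm - 1 := by omega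
    have hcontlast : u (r₁ + ρm) = u (r₂ + ρm) := by
      have h7 := hC34 (ρm - 1) (by omega)
      rw [show r₁ + 1 + (ρm - 1) = r₁ + ρm from by omega,
        show r₂ + 1 + (ρm - 1) = r₂ + ρm from by omega] at h7
      exact h7
    have hhost : u (k - 1) = u (k' - 1) := by
      apply hl
      show (σ (u (k - 1))).getLast _ = (σ (u (k' - 1))).getLast _
      rw [hhost₁, hhost₂, hcontlast]
    rw [ha₁, hoffeq] at hval₁
    rw [ha₂, hoffeq'] at hval₂
    rw [hhost] at hval₁
    rw [hval₂] at hval₁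
    exact ha12 (Option.some.inj hval₁).symm
  have hcut0 : IsCutP σ u q₁ := by
    have h9 := (hS13 0 (by omega)).2 (by simpa using hcutr)
    simpa using h9
  -- ===== extraction =====
  have extract : ∀ q k k', Phi σ u k = q → Phi σ u k' = q + n → W = factorAt u q n →
      k < k' ∧ W = wordMap σ (factorAt u k (k' - k)) := by
    intro q k k' h1 h2 h3
    have hkk : k < k' := by
      have := (Phi_strictMono (u := u) hne).lt_iff_lt (a := k) (b := k')
      omega
    refine ⟨hkk, ?_⟩
    have h4 := blocks_telescope hne hfix k (k' - k)
    rw [show k + (k' - k) = k' from by omega, h1, h2,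
      show q + n - q = n from by omega] at h4
    rw [h3]
    exact h4
  obtain ⟨k₁, hk₁⟩ := hcut0
  obtain ⟨k₂, hk₂⟩ := hcutn
  obtain ⟨hk₁₂, hWx⟩ := extract q₁ k₁ k₂ hk₁ hk₂ hq₁
  set x := factorAt u k₁ (k₂ - k₁) with hx
  obtain ⟨k₁', hk₁'⟩ := (hS12 0 (by omega)).1 ⟨k₁, by simpa using hk₁⟩
  obtain ⟨k₂', hk₂'⟩ := (hS12 n (le_refl n)).1 ⟨k₂, hk₂⟩
  obtain ⟨hk₁₂', hWx'⟩ := extract q₂ k₁' k₂' (by simpa using hk₁') hk₂' hq₂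
  have hxx' : factorAt u k₁' (k₂' - k₁') = x :=
    wordMap_injective hne hh (by rw [← hWx', ← hWx])
  obtain ⟨m₁, hm₁⟩ := hcutr
  obtain ⟨m₂, hm₂⟩ := (hS13 n (le_refl n)).1 ⟨k₂, hk₂⟩
  obtain ⟨hm₁₂, hWx₁⟩ := extract (r₁ + 1) m₁ m₂ hm₁ hm₂ hr₁
  have hx₁ : factorAt u m₁ (m₂ - m₁) = x :=
    wordMap_injective hne hh (by rw [← hWx₁, ← hWx])
  obtain ⟨m₁', hm₁'⟩ := (hS14 0 (by omega)).1 ⟨k₁, by simpa using hk₁⟩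
  obtain ⟨m₂', hm₂'⟩ := (hS14 n (le_refl n)).1 ⟨k₂, hk₂⟩
  obtain ⟨hm₁₂', hWx₂⟩ := extract (r₂ + 1) m₁' m₂' (by simpa using hm₁') hm₂' hr₂
  have hx₂ : factorAt u m₁' (m₂' - m₁') = x :=
    wordMap_injective hne hh (by rw [← hWx₂, ← hWx])
  -- ===== right specialness of x =====
  have hbval : b = (σ (u k₂)).head (hne _) := by
    rw [← hbv, ← hk₂, u_at_cut hne hfix]
  have hcval : c = (σ (u k₂')).head (hne _) := by
    rw [← hcv, ← hk₂', u_at_cut hne hfix]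
  have hneq : u k₂ ≠ u k₂' := by
    intro h
    apply hbc
    rw [hbval, hcval, h]
  have hmem₁ : x ++ [u k₂] ∈ Lang u := by
    have h9 : factorAt u k₁ ((k₂ - k₁) + 1) = x ++ [u k₂] := by
      rw [factorAt_succ_right, ← hx, show k₁ + (k₂ - k₁) = k₂ from by omega]
    rw [← h9]
    exact factorAt_mem_Lang u _ _
  have hmem₂ : x ++ [u k₂'] ∈ Lang u := by
    have h9 : factorAt u k₁' ((k₂' - k₁') + 1) = x ++ [u k₂'] := by
      rw [factorAt_succ_right, hxx', show k₁' + (k₂' - k₁') = k₂' from by omega]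
    rw [← h9]
    exact factorAt_mem_Lang u _ _
  -- ===== left specialness of x =====
  have hm₁pos : 1 ≤ m₁ := by
    rcases Nat.eq_zero_or_pos m₁ with h0 | h0
    · exfalso
      rw [h0] at hm₁
      simp at hm₁
    · exact h0
  have hm₁pos' : 1 ≤ m₁' := by
    rcases Nat.eq_zero_or_pos m₁' with h0 | h0
    · exfalso
      rw [h0] at hm₁'
      simp at hm₁'
    · exact h0
  have haval₁ : a₁ = (σ (u (m₁ - 1))).getLast (hne _) := by
    rw [← ha₁]
    have h7 := u_before_cut hne hfix (m₁ - 1)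
    rw [show m₁ - 1 + 1 = m₁ from by omega, hm₁,
      show r₁ + 1 - 1 = r₁ from by omega] at h7
    exact h7
  have haval₂ : a₂ = (σ (u (m₁' - 1))).getLast (hne _) := by
    rw [← ha₂]
    have h7 := u_before_cut hne hfix (m₁' - 1)
    rw [show m₁' - 1 + 1 = m₁' from by omega] at h7
    rw [show Phi σ u m₁' = r₂ + 1 from by simpa using hm₁'] at h7
    rw [show r₂ + 1 - 1 = r₂ from by omega] at h7
    exact h7
  have hneqL : u (m₁ - 1) ≠ u (m₁' - 1) := by
    intro h
    apply ha12
    rw [haval₁, haval₂, h]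
  have hmemL₁ : u (m₁ - 1) :: x ∈ Lang u := by
    have h9 : factorAt u (m₁ - 1) ((m₂ - m₁) + 1) = u (m₁ - 1) :: x := by
      rw [factorAt_succ_left, show m₁ - 1 + 1 = m₁ from by omega, hx₁]
    rw [← h9]
    exact factorAt_mem_Lang u _ _
  have hmemL₂ : u (m₁' - 1) :: x ∈ Lang u := by
    have h9 : factorAt u (m₁' - 1) ((m₂' - m₁') + 1) = u (m₁' - 1) :: x := by
      rw [factorAt_succ_left, show m₁' - 1 + 1 = m₁' from by omega, hx₂]
    rw [← h9]
    exact factorAt_mem_Lang u _ _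
  refine ⟨x, ?_, ⟨⟨u k₂, u k₂', hneq, hmem₁, hmem₂⟩,
    ⟨u (m₁ - 1), u (m₁' - 1), hneqL, hmemL₁, hmemL₂⟩⟩, hWx, ?_⟩
  · rw [hx]
    exact factorAt_mem_Lang u _ _
  · rw [hx]
    intro h
    have h9 := congrArg List.length h
    simp at h9
    omega

end Structure

section Descent

variable [Fintype A] [DecidableEq A] [Nonempty A] {σ : A → List A} {u : ℕ → A}

lemma descent_chain (hne : ∀ a, σ a ≠ []) (hfix : IsFixedPointSubst σ u)
    (hh : Function.Injective fun a => (σ a).head (hne a))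
    (hl : Function.Injective fun a => (σ a).getLast (hne a))
    (hprim1 : ∀ a b : A, b ∈ σ a) (hnp : ¬PeriodicSeq u) :
    ∃ L₁, 1 ≤ L₁ ∧ ∀ w U : List A, Bispecial u w → Bispecial u U →
      w <:+ U → w.length < U.length →
      ∃ k w₀ U₀ r, w = (wordMap σ)^[k] w₀ ∧ U = (wordMap σ)^[k] U₀ ∧
        U₀ = r ++ w₀ ∧ r ≠ [] ∧ w₀.length ≤ L₁ := by
  obtain ⟨L₁, hstruct⟩ := bispecial_structure hne hfix hh hl hprim1 hnp
  have hA := two_le_card (u := u) hnp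
  have h2 : ∀ a : A, 2 ≤ (σ a).length := two_le_block hprim1 hA
  refine ⟨L₁ + 1, by omega, ?_⟩
  have main : ∀ N w U, w.length ≤ N → Bispecial u w → Bispecial u U →
      w <:+ U → w.length < U.length →
      ∃ k w₀ U₀ r, w = (wordMap σ)^[k] w₀ ∧ U = (wordMap σ)^[k] U₀ ∧
        U₀ = r ++ w₀ ∧ r ≠ [] ∧ w₀.length ≤ L₁ + 1 := by
    intro N
    induction N with
    | zero =>
      intro w U hw _ _ hsuf hlen
      obtain ⟨r, hr⟩ := hsuf
      refine ⟨0, w, U, r, by simp, by simp, hr.symm, ?_, by omega⟩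
      intro h
      rw [h] at hr
      simp at hr
      have h9 := congrArg List.length hr
      omega
    | succ N ih =>
      intro w U hw hBw hBU hsuf hlen
      by_cases hwl : w.length ≤ L₁ + 1
      · obtain ⟨r, hr⟩ := hsuf
        refine ⟨0, w, U, r, by simp, by simp, hr.symm, ?_, hwl⟩
        intro h
        rw [h] at hr
        simp at hr
        have h9 := congrArg List.length hr
        omega
      · obtain ⟨x, hxL, hxB, hwx, hxne⟩ := hstruct w hBw (by omega)
        obtain ⟨y, hyL, hyB, hUy, hyne⟩ := hstruct U hBU (by omega)
        have hsuf' : x <:+ y := wordMap_suffix_cancel hne hl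
          (by rw [← hwx, ← hUy]; exact hsuf)
        have hxy : x ≠ y := by
          intro h
          rw [h] at hwx
          rw [← hUy] at hwx
          have h9 := congrArg List.length hwx
          omega
        have hlen' : x.length < y.length := by
          rcases Nat.lt_or_ge x.length y.length with h | h
          · exact h
          · exact absurd (hsuf'.eq_of_length (by have := hsuf'.length_le; omega)) hxy
        have hxw : x.length < w.length := by
          have hg := length_wordMap_ge_two h2 x
          rw [← hwx] at hg
          have : 1 ≤ x.length := List.length_pos_iff.2 hxne
          omega
        obtain ⟨k, w₀, U₀, r, e1, e2, e3, e4, e5⟩ :=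
          ih x y (by omega) hxB hyB hsuf' hlen'
        refine ⟨k + 1, w₀, U₀, r, ?_, ?_, e3, e4, e5⟩
        · rw [hwx, e1, Function.iterate_succ_apply']
        · rw [hUy, e2, Function.iterate_succ_apply']
  intro w U hBw hBU hsuf hlen
  exact main w.length w U (le_refl _) hBw hBU hsuf hlen

lemma Mlen_pos (hne : ∀ a, σ a ≠ []) : 1 ≤ Mlen σ := by
  have h1 := length_le_Mlen σ (Classical.arbitrary A)
  have h2 := List.length_pos_iff.2 (hne (Classical.arbitrary A))
  omega

lemma descent_bound (hne : ∀ a, σ a ≠ []) (hprim1 : ∀ a b : A, b ∈ σ a)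
    {L₁ : ℕ} {w U : List A}
    (h : ∃ k w₀ U₀ r, w = (wordMap σ)^[k] w₀ ∧ U = (wordMap σ)^[k] U₀ ∧
        U₀ = r ++ w₀ ∧ r ≠ [] ∧ w₀.length ≤ L₁) :
    w.length ≤ L₁ * Mlen σ * (U.length - w.length) := by
  obtain ⟨k, w₀, U₀, r, e1, e2, e3, e4, e5⟩ := h
  obtain ⟨rh, rt, rfl⟩ : ∃ rh rt, r = rh :: rt := by
    cases r with
    | nil => exact absurd rfl e4
    | cons rh rt => exact ⟨rh, rt, rfl⟩
  have hUsplit : U.length = ((wordMap σ)^[k] (rh :: rt)).length + w.length := by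
    rw [e2, e3, wordMap_iterate_append, List.length_append, ← e1]
  have hdiff : U.length - w.length = ((wordMap σ)^[k] (rh :: rt)).length := by omega
  rw [hdiff]
  set X := ((wordMap σ)^[k] [rh]).length with hX
  have hw : w.length ≤ w₀.length * (Mlen σ * X) := by
    rw [e1, length_iterate_eq_sum]
    have hb := List.sum_le_card_nsmul (w₀.map fun c => ((wordMap σ)^[k] [c]).length)
      (Mlen σ * X) ?bnd
    case bnd =>
      intro z hz
      obtain ⟨c, _, rfl⟩ := List.mem_map.1 hz
      exact balance hne hprim1 k c rh
    rw [smul_eq_mul, List.length_map] at hb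
    exact hb
  have hrh : X ≤ ((wordMap σ)^[k] (rh :: rt)).length := by
    rw [show rh :: rt = [rh] ++ rt from rfl, wordMap_iterate_append, List.length_append]
    omega
  calc w.length ≤ w₀.length * (Mlen σ * X) := hw
    _ ≤ L₁ * (Mlen σ * X) := Nat.mul_le_mul_right _ e5
    _ = L₁ * Mlen σ * X := by ring
    _ ≤ L₁ * Mlen σ * ((wordMap σ)^[k] (rh :: rt)).length := Nat.mul_le_mul_left _ hrh

theorem suffix_pair_bound (hne : ∀ a, σ a ≠ []) (hfix : IsFixedPointSubst σ u)
    (hh : Function.Injective fun a => (σ a).head (hne a))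
    (hl : Function.Injective fun a => (σ a).getLast (hne a))
    (hprim1 : ∀ a b : A, b ∈ σ a) (hnp : ¬PeriodicSeq u) :
    ∃ C : ℝ, 0 < C ∧ C < 1 ∧ ∀ w U : List A, Bispecial u w → Bispecial u U →
      w <:+ U → w.length < U.length → (w.length : ℝ) ≤ C * U.length := by
  obtain ⟨L₁, hL₁, hchain⟩ := descent_chain hne hfix hh hl hprim1 hnp
  set K := L₁ * Mlen σ with hK
  have hK1 : 1 ≤ K := by
    have := Mlen_pos (σ := σ) hne
    have : 1 * 1 ≤ L₁ * Mlen σ := Nat.mul_le_mul hL₁ this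
    omega
  have hKpos : (0 : ℝ) < (K : ℝ) + 1 := by positivity
  refine ⟨(K : ℝ) / ((K : ℝ) + 1), by positivity, ?_, ?_⟩
  · rw [div_lt_one hKpos]
    linarith
  · intro w U hBw hBU hsuf hlen
    have hb := descent_bound hne hprim1 (L₁ := L₁) (hchain w U hBw hBU hsuf hlen)
    rw [← hK] at hb
    have hnat : (K + 1) * w.length ≤ K * U.length := by
      have h1 : K * (U.length - w.length) + K * w.length = K * U.length := by
        rw [← Nat.mul_add]
        congr 1
        omega
      have h2 : (K + 1) * w.length = K * w.length + w.length := by ring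
      linarith
    have hr : ((K : ℝ) + 1) * (w.length : ℝ) ≤ (K : ℝ) * (U.length : ℝ) := by
      exact_mod_cast hnat
    rw [div_mul_eq_mul_div, le_div_iff₀ hKpos]
    linarith

end Descent

section Top

variable [Fintype A] [DecidableEq A] [Nonempty A] {H : A → List A} {u : ℕ → A}

lemma iterate_getElem0 (hne : ∀ a, H a ≠ []) (k : ℕ) (a : A) :
    ((wordMap H)^[k] [a])[0]? = some ((fun b => (H b).head (hne b))^[k] a) := by
  induction k generalizing a with
  | zero => simp
  | succ k ih =>
    rw [Function.iterate_succ_apply, wordMap_singleton]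
    have hsplit : H a = [(H a).head (hne a)] ++ (H a).tail := by
      simp [List.cons_head_tail]
    rw [hsplit, wordMap_iterate_append]
    rw [List.getElem?_append_left (List.length_pos_iff.2 (iterate_ne_nil hne k _))]
    rw [ih]
    rw [Function.iterate_succ_apply]

lemma iterate_reverse (σ : A → List A) (k : ℕ) (w : List A) :
    ((wordMap σ)^[k] w).reverse = (wordMap (rev σ))^[k] w.reverse := by
  induction k generalizing w with
  | zero => simp
  | succ k ih =>
    rw [Function.iterate_succ_apply', wordMap_rev, ih,
      ← Function.iterate_succ_apply' (wordMap (rev σ)) k w.reverse]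

lemma G_head (hne : ∀ a, H a ≠ []) (k : ℕ) (a : A) :
    ((wordMap H)^[k] [a]).head (iterate_ne_nil hne k a)
      = (fun b => (H b).head (hne b))^[k] a := by
  have h1 := head_getElem? _ (iterate_ne_nil hne k a)
  rw [iterate_getElem0 hne k a] at h1
  exact (Option.some.inj h1).symm

lemma G_last (hne : ∀ a, H a ≠ []) (k : ℕ) (a : A) :
    ((wordMap H)^[k] [a]).getLast (iterate_ne_nil hne k a)
      = (fun b => (H b).getLast (hne b))^[k] a := by
  have h2 := iterate_getElem0 (rev_ne hne) k a
  have h3 : (fun b => ((rev H) b).head (rev_ne hne b)) = fun b => (H b).getLast (hne b) :=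
    funext fun b => head_rev hne b
  rw [h3] at h2
  have h1 : ((wordMap H)^[k] [a]).reverse = (wordMap (rev H))^[k] [a] := by
    rw [iterate_reverse]
    simp
  rw [← h1] at h2
  set l := (wordMap H)^[k] [a] with hldef
  have hlne : l ≠ [] := iterate_ne_nil hne k a
  have hlpos : 0 < l.length := List.length_pos_iff.2 hlne
  have h5 : l.reverse[0]? = l[l.length - 1]? := by
    rw [List.getElem?_reverse (by simpa using hlpos)]
    congr 1
  rw [h5, getLast_getElem? _ hlne] at h2
  exact Option.some.inj h2

end Top

end Ov

open Ov

/-- (Lemma `lem:overlapcontrol`.) Two overlapping occurrences of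
bispecial words `U`, `V` (with `|U| ≤ |V|`) in a sequence all of whose factors lie
in the language overlap on at most a fixed proportion `C < 1` of `|U|`. -/
theorem bispecial_overlap_control
    {A : Type*} [Fintype A] [DecidableEq A] [TopologicalSpace A] [DiscreteTopology A]
    (H : A → List A) (hne : ∀ a, H a ≠ [])
    (hprim : PrimitiveSubst H) (haper : AperiodicSubst H)
    (hmarked : MarkedSubst H hne)
    (u : ℕ → A) (hu : IsFixedPointSubst H u) :
    ∃ C : ℝ, 0 < C ∧ C < 1 ∧
      ∀ z : ℕ → A, (∀ i n : ℕ, factorAt z i n ∈ Lang u) →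
        ∀ U V : List A, U ∈ Lang u → V ∈ Lang u →
          Bispecial u U → Bispecial u V →
          ∀ i j : ℕ, factorAt z i U.length = U → factorAt z j V.length = V →
            i < j → j < i + U.length → U.length ≤ V.length →
            ((i + U.length - j : ℕ) : ℝ) ≤ C * (U.length : ℝ) := by
  classical
  haveI : Nonempty A := ⟨u 0⟩
  obtain ⟨k₀, hk₀pos, hk₀⟩ := hprim
  set G : A → List A := fun a => (wordMap H)^[k₀] [a] with hG
  have hneG : ∀ a, G a ≠ [] := fun a => iterate_ne_nil hne k₀ a
  have hfixG : IsFixedPointSubst G u := isFixedPoint_power hne hu k₀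
  have hprimG : ∀ a b : A, b ∈ G a := fun a b => hk₀ a b
  have hnp : ¬PeriodicSeq u := haper u hu
  have hhG : Function.Injective fun a => (G a).head (hneG a) := by
    have he : (fun a => (G a).head (hneG a)) = (fun b => (H b).head (hne b))^[k₀] :=
      funext fun a => G_head hne k₀ a
    rw [he]
    exact Function.Injective.iterate hmarked.1 k₀
  have hlG : Function.Injective fun a => (G a).getLast (hneG a) := by
    have he : (fun a => (G a).getLast (hneG a)) = (fun b => (H b).getLast (hne b))^[k₀] :=
      funext fun a => G_last hne k₀ a
    rw [he]
    exact Function.Injective.iterate hmarked.2 k₀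
  obtain ⟨C, hC0, hC1, hbound⟩ := suffix_pair_bound hneG hfixG hhG hlG hprimG hnp
  refine ⟨C, hC0, hC1, ?_⟩
  intro z hz U V hU hV hBU hBV i j hUocc hVocc hij hji hUV
  set o := i + U.length - j with ho
  set w := factorAt z j o with hwdef
  have hwlen : w.length = o := by rw [hwdef, length_factorAt]
  have ho1 : 1 ≤ o := by omega
  have holt : o < U.length := by omega
  have hwsuf : w <:+ U := by
    have h1 := factorAt_add z i (j - i) o
    rw [show i + (j - i) = j from by omega, show (j - i) + o = U.length from by omega] at h1
    exact ⟨factorAt z i (j - i), by rw [hwdef, ← h1, hUocc]⟩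
  have hwpre : w <+: V := by
    have h1 := factorAt_add z j o (V.length - o)
    rw [show o + (V.length - o) = V.length from by omega] at h1
    exact ⟨factorAt z (j + o) (V.length - o), by rw [hwdef, ← h1, hVocc]⟩
  have hwLang : w ∈ Lang u := by rw [hwdef]; exact hz j o
  obtain ⟨b, c, hbc, hUb, hUc⟩ := hBU.1
  obtain ⟨a₁, a₂, ha12, hV1, hV2⟩ := hBV.2
  obtain ⟨ρ, hρ⟩ := hwsuf
  obtain ⟨τ, hτ⟩ := hwpre
  have hRS : RightSpecial u w := by
    refine ⟨b, c, hbc, ?_, ?_⟩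
    · have hs : w ++ [b] <:+ U ++ [b] := by
        rw [← hρ, List.append_assoc]
        exact List.suffix_append _ _
      exact infix_mem_Lang hUb hs.isInfix
    · have hs : w ++ [c] <:+ U ++ [c] := by
        rw [← hρ, List.append_assoc]
        exact List.suffix_append _ _
      exact infix_mem_Lang hUc hs.isInfix
  have hLS : LeftSpecial u w := by
    refine ⟨a₁, a₂, ha12, ?_, ?_⟩
    · have hs : a₁ :: w <+: a₁ :: V := by
        rw [← hτ]
        exact ⟨τ, rfl⟩
      exact infix_mem_Lang hV1 hs.isInfix
    · have hs : a₂ :: w <+: a₂ :: V := by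
        rw [← hτ]
        exact ⟨τ, rfl⟩
      exact infix_mem_Lang hV2 hs.isInfix
  have hwsuf' : w <:+ U := ⟨ρ, hρ⟩
  have hfinal := hbound w U ⟨hRS, hLS⟩ hBU hwsuf' (by omega)
  rw [hwlen] at hfinal
  exact hfinal
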